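/- arXiv:2210.08268 — 6 statements merged into one kernel-verified Lean document; each statement's English description precedes it below -/
import Mathlib

section
/- Let N ≥ 1, let σ be a permutation of {1,…,N}, let r : {1,…,N} → [0,∞), λ : {1,…,N} → [0,1], and let q, s ∈ [0,1). Then Σ_{v=1}^{∞} Σ_{b=1}^{∞} q^{v−1}(1−q) s^{b−1}(1−s) · [ Σ_{Q ⊆ {1,…,min(v,N)}} P^buy(Q; min(v,N), b, λ, σ) · (Σ_{i∈Q} r_{σ_i}) ] = Σ_{k=1}^{N} r_{σ_k} λ_{σ_k} q^{k−1} Σ_{u=0}^{k−1} s^u H_σ(k,u;λ), where the left-hand side is an absolutely convergent double series. -/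
open Finset

/-- `Hfun σ lam k u = H_σ(k,u;λ)`: the probability that exactly `u` of the first `k-1`
displayed products are purchased (ignoring attention span and budget). -/
noncomputable def Hfun (σ : ℕ → ℕ) (lam : ℕ → ℝ) (k u : ℕ) : ℝ :=
  ∑ Q ∈ (Finset.Icc 1 (k - 1)).powersetCard u,
    (∏ i ∈ Q, lam (σ i)) * ∏ i ∈ Finset.Icc 1 (k - 1) \ Q, (1 - lam (σ i))

/-- `Pbuy σ lam v b Q = P^buy(Q; v, b, λ, σ)`: the probability that a consumer with
attention span `v` and purchase budget `b` purchases exactly the positions `Q ⊆ {1,…,v}`. -/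
noncomputable def Pbuy (σ : ℕ → ℕ) (lam : ℕ → ℝ) (v b : ℕ) (Q : Finset ℕ) : ℝ :=
  if Q.card < b then
    (∏ k ∈ Q, lam (σ k)) * ∏ k ∈ Finset.Icc 1 v \ Q, (1 - lam (σ k))
  else if Q.card = b then
    (∏ k ∈ Q, lam (σ k)) *
      ∏ k ∈ (Finset.Icc 1 v \ Q).filter (fun k => k ≤ Q.sup id), (1 - lam (σ k))
  else 0


noncomputable def PT (σ : ℕ → ℕ) (lam : ℕ → ℝ) (s : Finset ℕ) (c : ℕ) (Q : Finset ℕ) : ℝ :=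
  if Q.card < c then
    (∏ k ∈ Q, lam (σ k)) * ∏ k ∈ s \ Q, (1 - lam (σ k))
  else if Q.card = c then
    (∏ k ∈ Q, lam (σ k)) *
      ∏ k ∈ (s \ Q).filter (fun k => k ≤ Q.sup id), (1 - lam (σ k))
  else 0

lemma PT_sum_one (σ : ℕ → ℕ) (lam : ℕ → ℝ) :
    ∀ (n : ℕ) (s : Finset ℕ), s.card = n → (0 ∉ s) → ∀ c : ℕ,
      ∑ Q ∈ s.powerset, PT σ lam s c Q = 1 := by
  intro n
  induction n using Nat.strong_induction_on with
  | _ n IH =>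
    intro s hcard h0 c
    rcases Nat.eq_zero_or_pos c with rfl | hc
    · -- c = 0 : only Q = ∅ contributes 1
      rw [Finset.sum_eq_single ∅]
      · show PT σ lam s 0 ∅ = 1
        unfold PT
        rw [if_neg (by simp), if_pos (by simp)]
        rw [Finset.prod_empty, one_mul, Finset.sdiff_empty]
        rw [Finset.filter_false_of_mem, Finset.prod_empty]
        intro x hx hle
        simp only [Finset.sup_empty, le_bot_iff] at hle
        rw [show (⊥:ℕ) = 0 from rfl] at hle; exact h0 (hle ▸ hx)
      · intro Q hQ hne
        have hpos : 0 < Q.card := Finset.card_pos.mpr (Finset.nonempty_iff_ne_empty.mpr hne)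
        unfold PT
        rw [if_neg (by omega), if_neg (by omega)]
      · intro h; exact absurd (Finset.empty_mem_powerset s) h
    · rcases Finset.eq_empty_or_nonempty s with rfl | hs
      · simp [PT, hc]
      · set a := s.min' hs with ha
        have hamem : a ∈ s := s.min'_mem hs
        have ha1 : 1 ≤ a := by
          rcases Nat.eq_zero_or_pos a with h | h
          · exact absurd (h ▸ hamem) h0
          · exact h
        set t := s.erase a with hts
        have hat : a ∉ t := Finset.notMem_erase a s
        have hst : s = insert a t := (Finset.insert_erase hamem).symm
        have htlt : ∀ x ∈ t, a < x := by
          intro x hx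
          have hxs : x ∈ s := Finset.mem_of_mem_erase hx
          have hxa : x ≠ a := Finset.ne_of_mem_erase hx
          exact lt_of_le_of_ne (s.min'_le x hxs) (Ne.symm hxa)
        have h0t : 0 ∉ t := fun h => h0 (Finset.mem_of_mem_erase h)
        have htcard : t.card < n := by
          rw [← hcard, hts]
          exact Finset.card_erase_lt_of_mem hamem
        have IH1 := IH t.card htcard t rfl h0t c
        have IH2 := IH t.card htcard t rfl h0t (c - 1)
        rw [hst, Finset.sum_powerset_insert hat]
        have hsd : ∀ Q : Finset ℕ, a ∉ Q → (insert a t) \ Q = insert a (t \ Q) := by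
          intro Q haQ
          rw [Finset.insert_sdiff_of_notMem _ haQ]
        have hsd2 : ∀ Q : Finset ℕ, insert a t \ insert a Q = t \ Q := by
          intro Q
          ext x
          simp only [Finset.mem_sdiff, Finset.mem_insert, not_or]
          constructor
          · rintro ⟨h1 | h1, h2, h3⟩
            · exact absurd h1 h2
            · exact ⟨h1, h3⟩
          · rintro ⟨h1, h2⟩
            exact ⟨Or.inr h1, fun he => hat (he ▸ h1), h2⟩
        have key1 : ∀ Q ∈ t.powerset, PT σ lam (insert a t) c Q
            = (1 - lam (σ a)) * PT σ lam t c Q := by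
          intro Q hQ
          have hQt : Q ⊆ t := Finset.mem_powerset.mp hQ
          have haQ : a ∉ Q := fun h => hat (hQt h)
          have hanotin : a ∉ t \ Q := fun h => hat (Finset.mem_sdiff.mp h).1
          rcases lt_trichotomy Q.card c with h | h | h
          · unfold PT
            rw [if_pos h, if_pos h, hsd _ haQ, Finset.prod_insert hanotin]
            ring
          · unfold PT
            rw [if_neg (by omega), if_pos h, if_neg (by omega), if_pos h]
            have hQne : Q.Nonempty := Finset.card_pos.mp (by omega)
            obtain ⟨x, hx⟩ := hQne
            have hPa : a ≤ Q.sup id := le_of_lt (lt_of_lt_of_le (htlt x (hQt hx)) (Finset.le_sup (f := id) hx))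
            rw [hsd _ haQ, Finset.filter_insert, if_pos hPa,
              Finset.prod_insert (fun h => hanotin (Finset.mem_of_mem_filter a h))]
            ring
          · unfold PT
            rw [if_neg (by omega), if_neg (by omega), if_neg (by omega), if_neg (by omega)]
            ring
        have key2 : ∀ Q ∈ t.powerset, PT σ lam (insert a t) c (insert a Q)
            = lam (σ a) * PT σ lam t (c - 1) Q := by
          intro Q hQ
          have hQt : Q ⊆ t := Finset.mem_powerset.mp hQ
          have haQ : a ∉ Q := fun h => hat (hQt h)
          have hcard' : (insert a Q).card = Q.card + 1 := Finset.card_insert_of_notMem haQ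
          rcases lt_trichotomy (Q.card + 1) c with h | h | h
          · unfold PT
            rw [if_pos (by omega), if_pos (by omega), hsd2, Finset.prod_insert haQ]
            ring
          · unfold PT
            rw [if_neg (by omega), if_pos (by omega), if_neg (by omega), if_pos (by omega),
              Finset.prod_insert haQ, hsd2]
            have hfil : (t \ Q).filter (fun k => k ≤ (insert a Q).sup id)
                = (t \ Q).filter (fun k => k ≤ Q.sup id) := by
              apply Finset.filter_congr
              intro x hx
              have hax : a < x := htlt x (Finset.mem_sdiff.mp hx).1
              simp only [Finset.sup_insert, id, eq_iff_iff, le_sup_iff]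
              constructor
              · rintro (h1 | h1)
                · omega
                · exact h1
              · exact fun h1 => Or.inr h1
            rw [hfil]
            ring
          · unfold PT
            rw [if_neg (by omega), if_neg (by omega), if_neg (by omega), if_neg (by omega)]
            ring
        rw [Finset.sum_congr rfl key1, Finset.sum_congr rfl key2,
          ← Finset.mul_sum, ← Finset.mul_sum, IH1, IH2]
        ring


lemma Pbuy_eq_PT (σ : ℕ → ℕ) (lam : ℕ → ℝ) (v b : ℕ) (Q : Finset ℕ) :
    Pbuy σ lam v b Q = PT σ lam (Finset.Icc 1 v) b Q := rfl

lemma sum_powerset_union : ∀ (A B : Finset ℕ) (f : Finset ℕ → ℝ), Disjoint A B →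
    ∑ Q ∈ (A ∪ B).powerset, f Q = ∑ P ∈ A.powerset, ∑ R ∈ B.powerset, f (P ∪ R) := by
  intro A
  induction A using Finset.induction_on with
  | empty => intro B f h; simp
  | @insert a s ha ih =>
    intro B f hdisj
    have haB : a ∉ B := Finset.disjoint_left.mp hdisj (Finset.mem_insert_self a s)
    have hsB : Disjoint s B := hdisj.mono_left (Finset.subset_insert a s)
    have haUB : a ∉ s ∪ B := by simp [ha, haB]
    rw [Finset.insert_union, Finset.sum_powerset_insert haUB,
      Finset.sum_powerset_insert ha, ih B f hsB, ih B (fun Q => f (insert a Q)) hsB]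
    congr 1
    apply Finset.sum_congr rfl
    intro P hP
    apply Finset.sum_congr rfl
    intro R hR
    rw [Finset.insert_union]

lemma Pbuy_split (σ : ℕ → ℕ) (lam : ℕ → ℝ) (v b k : ℕ) (hk1 : 1 ≤ k) (hkv : k ≤ v)
    (hb : 1 ≤ b) (P R : Finset ℕ) (hP : P ⊆ Finset.Icc 1 (k-1)) (hR : R ⊆ Finset.Icc (k+1) v) :
    Pbuy σ lam v b (insert k (P ∪ R)) =
      if P.card < b then
        ((∏ i ∈ P, lam (σ i)) * ∏ i ∈ Finset.Icc 1 (k-1) \ P, (1 - lam (σ i))) * lam (σ k)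
          * PT σ lam (Finset.Icc (k+1) v) (b - 1 - P.card) R
      else 0 := by
  have hkP : k ∉ P := fun h => by have := hP h; rw [Finset.mem_Icc] at this; omega
  have hkR : k ∉ R := fun h => by have := hR h; rw [Finset.mem_Icc] at this; omega
  have hPR : Disjoint P R := by
    rw [Finset.disjoint_left]
    intro x hxP hxR
    have h1 := hP hxP; have h2 := hR hxR
    rw [Finset.mem_Icc] at h1 h2; omega
  have hkPR : k ∉ P ∪ R := by simp [hkP, hkR]
  have hcard : (insert k (P ∪ R)).card = P.card + R.card + 1 := by
    rw [Finset.card_insert_of_notMem hkPR, Finset.card_union_of_disjoint hPR]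
  have hprodQ : (∏ i ∈ insert k (P ∪ R), lam (σ i))
      = lam (σ k) * ((∏ i ∈ P, lam (σ i)) * ∏ i ∈ R, lam (σ i)) := by
    rw [Finset.prod_insert hkPR, Finset.prod_union hPR]
  have hdis : Disjoint (Finset.Icc 1 (k-1) \ P) (Finset.Icc (k+1) v \ R) := by
    rw [Finset.disjoint_left]
    intro x hx1 hx2
    rw [Finset.mem_sdiff, Finset.mem_Icc] at hx1 hx2; omega
  have hsplit : Finset.Icc 1 v \ (insert k (P ∪ R))
      = (Finset.Icc 1 (k-1) \ P) ∪ (Finset.Icc (k+1) v \ R) := by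
    ext x
    simp only [Finset.mem_sdiff, Finset.mem_insert, Finset.mem_union, Finset.mem_Icc, not_or]
    constructor
    · rintro ⟨⟨h1, h2⟩, h3, h4, h5⟩
      rcases lt_or_gt_of_ne h3 with h | h
      · left; exact ⟨⟨h1, by omega⟩, h4⟩
      · right; exact ⟨⟨by omega, h2⟩, h5⟩
    · rintro (⟨⟨h1, h2⟩, h3⟩ | ⟨⟨h1, h2⟩, h3⟩)
      · refine ⟨⟨h1, by omega⟩, by omega, h3, fun hxR => ?_⟩
        have := hR hxR; rw [Finset.mem_Icc] at this; omega
      · refine ⟨⟨by omega, h2⟩, by omega, fun hxP => ?_, h3⟩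
        have := hP hxP; rw [Finset.mem_Icc] at this; omega
  by_cases hub : P.card < b
  · rw [if_pos hub]
    have hsupP : P.sup id ≤ k - 1 := Finset.sup_le (fun x hx => (Finset.mem_Icc.mp (hP hx)).2)
    rcases lt_trichotomy R.card (b - 1 - P.card) with h | h | h
    · unfold Pbuy PT
      rw [if_pos (by omega), if_pos h, hsplit, Finset.prod_union hdis, hprodQ]
      ring
    · unfold Pbuy PT
      rw [if_neg (by omega), if_pos (by omega), if_neg (by omega), if_pos h]
      have hsupQ : k ≤ (insert k (P ∪ R)).sup id :=
        Finset.le_sup (f := id) (Finset.mem_insert_self k (P ∪ R))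
      have hfil : (Finset.Icc 1 v \ insert k (P ∪ R)).filter
            (fun x => x ≤ (insert k (P ∪ R)).sup id)
          = (Finset.Icc 1 (k-1) \ P) ∪
            (Finset.Icc (k+1) v \ R).filter (fun x => x ≤ R.sup id) := by
        rw [hsplit, Finset.filter_union]
        congr 1
        · apply Finset.filter_true_of_mem
          intro x hx
          have := (Finset.mem_Icc.mp (Finset.mem_sdiff.mp hx).1).2
          omega
        · apply Finset.filter_congr
          intro x hx
          have hx1 : k + 1 ≤ x := (Finset.mem_Icc.mp (Finset.mem_sdiff.mp hx).1).1
          simp only [Finset.sup_insert, Finset.sup_union, id, eq_iff_iff, le_sup_iff]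
          omega
      rw [hfil, Finset.prod_union (hdis.mono_right (Finset.filter_subset _ _)), hprodQ]
      ring
    · unfold Pbuy PT
      rw [if_neg (by omega), if_neg (by omega), if_neg (by omega), if_neg (by omega)]
      ring
  · rw [if_neg hub]
    unfold Pbuy
    rw [if_neg (by omega), if_neg (by omega)]


lemma Hfun_eq_zero (σ : ℕ → ℕ) (lam : ℕ → ℝ) (k u : ℕ) (hk1 : 1 ≤ k) (h : k ≤ u) :
    Hfun σ lam k u = 0 := by
  unfold Hfun
  rw [Finset.powersetCard_eq_empty.mpr, Finset.sum_empty]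
  rw [Nat.card_Icc]; omega

lemma sum_ite_H (σ : ℕ → ℕ) (lam : ℕ → ℝ) (k b : ℕ) (hk1 : 1 ≤ k) :
    ∑ u ∈ Finset.range k, (if u < b then Hfun σ lam k u else 0)
      = ∑ u ∈ Finset.range b, Hfun σ lam k u := by
  rw [← Finset.sum_filter]
  have h1 : (Finset.range k).filter (fun u => u < b) = Finset.range (min b k) := by
    ext x; simp only [Finset.mem_filter, Finset.mem_range, lt_min_iff]; omega
  rw [h1]
  symm
  apply (Finset.sum_subset _ _).symm
  · intro x hx; simp only [Finset.mem_range, lt_min_iff] at *; omega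
  · intro x hx hnx
    simp only [Finset.mem_range, lt_min_iff] at hx hnx
    exact Hfun_eq_zero σ lam k x hk1 (by omega)

lemma sum_pick (σ : ℕ → ℕ) (lam : ℕ → ℝ) (v b k : ℕ) (hk1 : 1 ≤ k) (hkv : k ≤ v) (hb : 1 ≤ b) :
    ∑ Q ∈ (Finset.Icc 1 v).powerset, (if k ∈ Q then Pbuy σ lam v b Q else 0)
      = lam (σ k) * ∑ u ∈ Finset.range b, Hfun σ lam k u := by
  have hk : k ∈ Finset.Icc 1 v := Finset.mem_Icc.mpr ⟨hk1, hkv⟩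
  have herase : (Finset.Icc 1 v).erase k = Finset.Icc 1 (k-1) ∪ Finset.Icc (k+1) v := by
    ext x
    simp only [Finset.mem_erase, Finset.mem_Icc, Finset.mem_union]
    omega
  have hAB : Disjoint (Finset.Icc 1 (k-1)) (Finset.Icc (k+1) v) := by
    rw [Finset.disjoint_left]
    intro x hx1 hx2
    rw [Finset.mem_Icc] at hx1 hx2; omega
  have h0B : (0 : ℕ) ∉ Finset.Icc (k+1) v := by
    rw [Finset.mem_Icc]; omega
  rw [show Finset.Icc 1 v = insert k ((Finset.Icc 1 v).erase k) from
    (Finset.insert_erase hk).symm, Finset.sum_powerset_insert (Finset.notMem_erase k _)]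
  rw [Finset.sum_eq_zero (fun Q hQ => by
    rw [if_neg (fun h => Finset.notMem_erase k _ (Finset.mem_powerset.mp hQ h))]), zero_add]
  have hstep : ∀ Q ∈ ((Finset.Icc 1 v).erase k).powerset,
      (if k ∈ insert k Q then Pbuy σ lam v b (insert k Q) else 0)
        = Pbuy σ lam v b (insert k Q) := fun Q _ => if_pos (Finset.mem_insert_self k Q)
  rw [Finset.sum_congr rfl hstep]
  rw [herase, sum_powerset_union _ _ _ hAB]
  have hstep2 : ∀ P ∈ (Finset.Icc 1 (k-1)).powerset,
      ∑ R ∈ (Finset.Icc (k+1) v).powerset, Pbuy σ lam v b (insert k (P ∪ R))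
        = (if P.card < b then
            ((∏ i ∈ P, lam (σ i)) * ∏ i ∈ Finset.Icc 1 (k-1) \ P, (1 - lam (σ i)))
              * lam (σ k) else 0) := by
    intro P hP
    rw [Finset.sum_congr rfl (fun R hR => Pbuy_split σ lam v b k hk1 hkv hb P R
      (Finset.mem_powerset.mp hP) (Finset.mem_powerset.mp hR))]
    by_cases h : P.card < b
    · simp only [if_pos h]
      rw [← Finset.mul_sum, PT_sum_one σ lam _ _ rfl h0B, mul_one]
    · simp only [if_neg h]
      exact Finset.sum_const_zero
  rw [Finset.sum_congr rfl hstep2, Finset.sum_powerset]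
  rw [Nat.card_Icc]
  have hkk : k - 1 + 1 - 1 + 1 = k := by omega
  rw [hkk]
  have hstep3 : ∀ j ∈ Finset.range k,
      (∑ P ∈ (Finset.Icc 1 (k-1)).powersetCard j,
        (if P.card < b then
            ((∏ i ∈ P, lam (σ i)) * ∏ i ∈ Finset.Icc 1 (k-1) \ P, (1 - lam (σ i)))
              * lam (σ k) else 0))
        = (if j < b then Hfun σ lam k j else 0) * lam (σ k) := by
    intro j hj
    by_cases h : j < b
    · rw [Finset.sum_congr rfl (fun P hP => if_pos
        (show P.card < b by rw [(Finset.mem_powersetCard.mp hP).2]; exact h)),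
        ← Finset.sum_mul, if_pos h]
      rfl
    · rw [Finset.sum_eq_zero (fun P hP => if_neg
        (show ¬ P.card < b by rw [(Finset.mem_powersetCard.mp hP).2]; exact h)),
        if_neg h, zero_mul]
  rw [Finset.sum_congr rfl hstep3, ← Finset.sum_mul, sum_ite_H σ lam k b hk1]
  ring

lemma revenue_fin (σ : ℕ → ℕ) (lam r : ℕ → ℝ) (v b : ℕ) (hv : 1 ≤ v) (hb : 1 ≤ b) :
    ∑ Q ∈ (Finset.Icc 1 v).powerset, Pbuy σ lam v b Q * ∑ i ∈ Q, r (σ i)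
      = ∑ k ∈ Finset.Icc 1 v, r (σ k) * (lam (σ k) * ∑ u ∈ Finset.range b, Hfun σ lam k u) := by
  have h1 : ∀ Q ∈ (Finset.Icc 1 v).powerset,
      Pbuy σ lam v b Q * ∑ i ∈ Q, r (σ i)
        = ∑ k ∈ Finset.Icc 1 v, (if k ∈ Q then Pbuy σ lam v b Q else 0) * r (σ k) := by
    intro Q hQ
    rw [Finset.mul_sum]
    rw [show ∑ k ∈ Finset.Icc 1 v, (if k ∈ Q then Pbuy σ lam v b Q else 0) * r (σ k)
      = ∑ k ∈ Finset.Icc 1 v, (if k ∈ Q then Pbuy σ lam v b Q * r (σ k) else 0) from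
      Finset.sum_congr rfl (fun k _ => by split_ifs <;> ring)]
    rw [Finset.sum_ite_mem]
    rw [Finset.inter_eq_right.mpr (Finset.mem_powerset.mp hQ)]
  rw [Finset.sum_congr rfl h1, Finset.sum_comm]
  apply Finset.sum_congr rfl
  intro k hk
  rw [← Finset.sum_mul,
    sum_pick σ lam v b k (Finset.mem_Icc.mp hk).1 (Finset.mem_Icc.mp hk).2 hb]
  ring

lemma geo_summable {x : ℝ} (h0 : 0 ≤ x) (h1 : x < 1) (m : ℕ) :
    Summable (fun v : ℕ => if m ≤ v then x ^ v * (1 - x) else 0) := by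
  refine Summable.of_nonneg_of_le (fun v => ?_) (fun v => ?_)
    ((summable_geometric_of_lt_one h0 h1).mul_right (1 - x))
  · split_ifs with h
    · have hx : (0:ℝ) ≤ 1 - x := by linarith
      positivity
    · exact le_rfl
  · split_ifs with h
    · exact le_rfl
    · have hx : (0:ℝ) ≤ 1 - x := by linarith
      positivity

lemma geo_tsum {x : ℝ} (h0 : 0 ≤ x) (h1 : x < 1) : ∀ m : ℕ,
    (∑' v : ℕ, if m ≤ v then x ^ v * (1 - x) else 0) = x ^ m := by
  intro m
  induction m with
  | zero =>
    simp only [Nat.zero_le, if_true]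
    rw [tsum_mul_right, tsum_geometric_of_lt_one h0 h1, pow_zero,
      inv_mul_cancel₀ (by linarith)]
  | succ m ih =>
    have hdecomp : (fun v : ℕ => if m ≤ v then x ^ v * (1 - x) else 0)
        = (fun v : ℕ => (if m + 1 ≤ v then x ^ v * (1 - x) else 0)
            + (if v = m then x ^ m * (1 - x) else 0)) := by
      funext v
      by_cases h : v = m
      · subst h
        rw [if_pos le_rfl, if_neg (by omega), if_pos rfl]
        ring
      · rw [if_neg h]
        by_cases h2 : m ≤ v
        · rw [if_pos h2, if_pos (by omega)]
          ring
        · rw [if_neg h2, if_neg (by omega)]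
          ring
    have key : (∑' v : ℕ, if m ≤ v then x ^ v * (1 - x) else 0)
        = (∑' v : ℕ, if m + 1 ≤ v then x ^ v * (1 - x) else 0) + x ^ m * (1 - x) := by
      rw [hdecomp, Summable.tsum_add (geo_summable h0 h1 (m + 1))
        ((hasSum_ite_eq m (x ^ m * (1 - x))).summable), tsum_ite_eq]
    rw [ih] at key
    have : (∑' v : ℕ, if m + 1 ≤ v then x ^ v * (1 - x) else 0) = x ^ m - x ^ m * (1 - x) := by
      linarith
    rw [this, pow_succ]
    ring


set_option maxHeartbeats 1000000 in
/-- the expected revenue, written as a double series over the geometric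
attention span `v` and budget `b` (indexed here by `v+1, b+1` with `v, b : ℕ`), is an
absolutely convergent series whose sum equals
`Σ_{k=1}^N r_{σ_k} λ_{σ_k} q^{k-1} Σ_{u=0}^{k-1} s^u H_σ(k,u;λ)`. -/
theorem stmt1 (N : ℕ) (hN : 1 ≤ N) (σ : ℕ → ℕ)
    (hσ : Set.BijOn σ (Set.Icc 1 N) (Set.Icc 1 N))
    (r lam : ℕ → ℝ)
    (hr : ∀ k ∈ Set.Icc 1 N, 0 ≤ r k)
    (hlam : ∀ k ∈ Set.Icc 1 N, lam k ∈ Set.Icc (0 : ℝ) 1)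
    (q s : ℝ) (hq : q ∈ Set.Ico (0 : ℝ) 1) (hs : s ∈ Set.Ico (0 : ℝ) 1) :
    Summable (fun p : ℕ × ℕ =>
      q ^ p.1 * (1 - q) * (s ^ p.2 * (1 - s)) *
        ∑ Q ∈ (Finset.Icc 1 (min (p.1 + 1) N)).powerset,
          Pbuy σ lam (min (p.1 + 1) N) (p.2 + 1) Q * ∑ i ∈ Q, r (σ i)) ∧
    (∑' v : ℕ, ∑' b : ℕ,
        q ^ v * (1 - q) * (s ^ b * (1 - s)) *
          ∑ Q ∈ (Finset.Icc 1 (min (v + 1) N)).powerset,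
            Pbuy σ lam (min (v + 1) N) (b + 1) Q * ∑ i ∈ Q, r (σ i)) =
      ∑ k ∈ Finset.Icc 1 N, r (σ k) * lam (σ k) * q ^ (k - 1) *
        ∑ u ∈ Finset.range k, s ^ u * Hfun σ lam k u := by
  obtain ⟨hq0, hq1⟩ := hq
  obtain ⟨hs0, hs1⟩ := hs
  have hqnn : ∀ m n : ℕ, 0 ≤ (if m ≤ n then q ^ n * (1 - q) else 0) := by
    intro m n
    split_ifs
    · have : (0:ℝ) ≤ 1 - q := by linarith
      positivity
    · exact le_rfl
  have hsnn : ∀ m n : ℕ, 0 ≤ (if m ≤ n then s ^ n * (1 - s) else 0) := by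
    intro m n
    split_ifs
    · have : (0:ℝ) ≤ 1 - s := by linarith
      positivity
    · exact le_rfl
  have hpiece : ∀ k u : ℕ, Summable (fun p : ℕ × ℕ =>
      (r (σ k) * lam (σ k) * Hfun σ lam k u) *
        ((if k - 1 ≤ p.1 then q ^ p.1 * (1 - q) else 0) *
          (if u ≤ p.2 then s ^ p.2 * (1 - s) else 0))) := by
    intro k u
    exact ((geo_summable hq0 hq1 (k - 1)).mul_of_nonneg (geo_summable hs0 hs1 u)
      (fun n => hqnn (k - 1) n) (fun n => hsnn u n)).mul_left _
  have key_eq : ∀ v b : ℕ,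
      q ^ v * (1 - q) * (s ^ b * (1 - s)) *
        ∑ Q ∈ (Finset.Icc 1 (min (v + 1) N)).powerset,
          Pbuy σ lam (min (v + 1) N) (b + 1) Q * ∑ i ∈ Q, r (σ i)
      = ∑ k ∈ Finset.Icc 1 N, ∑ u ∈ Finset.range k,
          (r (σ k) * lam (σ k) * Hfun σ lam k u) *
            ((if k - 1 ≤ v then q ^ v * (1 - q) else 0) *
              (if u ≤ b then s ^ b * (1 - s) else 0)) := by
    intro v b
    rw [revenue_fin σ lam r (min (v + 1) N) (b + 1) (le_min (by omega) hN) (by omega)]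
    rw [show Finset.Icc 1 (min (v + 1) N) = (Finset.Icc 1 N).filter (fun k => k ≤ v + 1) from by
      ext x; simp only [Finset.mem_Icc, Finset.mem_filter]; omega]
    rw [Finset.sum_filter, Finset.mul_sum]
    apply Finset.sum_congr rfl
    intro k hk
    have hk1 : 1 ≤ k := (Finset.mem_Icc.mp hk).1
    rw [← sum_ite_H σ lam k (b + 1) hk1]
    by_cases hkv : k ≤ v + 1
    · rw [if_pos hkv]
      simp only [Finset.mul_sum]
      apply Finset.sum_congr rfl
      intro u hu
      rw [if_pos (show k - 1 ≤ v by omega)]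
      split_ifs <;> first | omega | ring
    · rw [if_neg hkv, mul_zero]
      symm
      apply Finset.sum_eq_zero
      intro u hu
      rw [if_neg (show ¬ k - 1 ≤ v by omega), zero_mul, mul_zero]
  have hFsum : Summable (fun p : ℕ × ℕ =>
      q ^ p.1 * (1 - q) * (s ^ p.2 * (1 - s)) *
        ∑ Q ∈ (Finset.Icc 1 (min (p.1 + 1) N)).powerset,
          Pbuy σ lam (min (p.1 + 1) N) (p.2 + 1) Q * ∑ i ∈ Q, r (σ i)) := by
    apply Summable.congr (f := fun p : ℕ × ℕ =>
      ∑ k ∈ Finset.Icc 1 N, ∑ u ∈ Finset.range k,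
          (r (σ k) * lam (σ k) * Hfun σ lam k u) *
            ((if k - 1 ≤ p.1 then q ^ p.1 * (1 - q) else 0) *
              (if u ≤ p.2 then s ^ p.2 * (1 - s) else 0)))
    · exact summable_sum (fun k _ => summable_sum (fun u _ => hpiece k u))
    · intro p
      exact (key_eq p.1 p.2).symm
  refine ⟨hFsum, ?_⟩
  calc (∑' v : ℕ, ∑' b : ℕ,
        q ^ v * (1 - q) * (s ^ b * (1 - s)) *
          ∑ Q ∈ (Finset.Icc 1 (min (v + 1) N)).powerset,
            Pbuy σ lam (min (v + 1) N) (b + 1) Q * ∑ i ∈ Q, r (σ i))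
      = ∑' p : ℕ × ℕ,
        q ^ p.1 * (1 - q) * (s ^ p.2 * (1 - s)) *
          ∑ Q ∈ (Finset.Icc 1 (min (p.1 + 1) N)).powerset,
            Pbuy σ lam (min (p.1 + 1) N) (p.2 + 1) Q * ∑ i ∈ Q, r (σ i) :=
        (Summable.tsum_prod' hFsum hFsum.prod_factor).symm
    _ = ∑' p : ℕ × ℕ, ∑ k ∈ Finset.Icc 1 N, ∑ u ∈ Finset.range k,
          (r (σ k) * lam (σ k) * Hfun σ lam k u) *
            ((if k - 1 ≤ p.1 then q ^ p.1 * (1 - q) else 0) *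
              (if u ≤ p.2 then s ^ p.2 * (1 - s) else 0)) :=
        tsum_congr (fun p => key_eq p.1 p.2)
    _ = ∑ k ∈ Finset.Icc 1 N, ∑' p : ℕ × ℕ, ∑ u ∈ Finset.range k,
          (r (σ k) * lam (σ k) * Hfun σ lam k u) *
            ((if k - 1 ≤ p.1 then q ^ p.1 * (1 - q) else 0) *
              (if u ≤ p.2 then s ^ p.2 * (1 - s) else 0)) :=
        Summable.tsum_finsetSum (fun k _ => summable_sum (fun u _ => hpiece k u))
    _ = ∑ k ∈ Finset.Icc 1 N, ∑ u ∈ Finset.range k, ∑' p : ℕ × ℕ,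
          (r (σ k) * lam (σ k) * Hfun σ lam k u) *
            ((if k - 1 ≤ p.1 then q ^ p.1 * (1 - q) else 0) *
              (if u ≤ p.2 then s ^ p.2 * (1 - s) else 0)) :=
        Finset.sum_congr rfl (fun k _ => Summable.tsum_finsetSum (fun u _ => hpiece k u))
    _ = ∑ k ∈ Finset.Icc 1 N, ∑ u ∈ Finset.range k,
          (r (σ k) * lam (σ k) * Hfun σ lam k u) * (q ^ (k - 1) * s ^ u) := by
        apply Finset.sum_congr rfl
        intro k _
        apply Finset.sum_congr rfl
        intro u _
        have hsep : Summable (fun p : ℕ × ℕ =>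
            (if k - 1 ≤ p.1 then q ^ p.1 * (1 - q) else 0) *
              (if u ≤ p.2 then s ^ p.2 * (1 - s) else 0)) :=
          (geo_summable hq0 hq1 (k - 1)).mul_of_nonneg (geo_summable hs0 hs1 u)
            (fun n => hqnn (k - 1) n) (fun n => hsnn u n)
        rw [tsum_mul_left]
        congr 1
        rw [Summable.tsum_prod' hsep hsep.prod_factor]
        calc (∑' (v : ℕ) (b : ℕ),
              (if k - 1 ≤ v then q ^ v * (1 - q) else 0) *
                (if u ≤ b then s ^ b * (1 - s) else 0))
            = ∑' (v : ℕ), (if k - 1 ≤ v then q ^ v * (1 - q) else 0) *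
                ∑' (b : ℕ), (if u ≤ b then s ^ b * (1 - s) else 0) := by
              apply tsum_congr
              intro v
              exact tsum_mul_left
          _ = (∑' (v : ℕ), (if k - 1 ≤ v then q ^ v * (1 - q) else 0)) *
                ∑' (b : ℕ), (if u ≤ b then s ^ b * (1 - s) else 0) := tsum_mul_right
          _ = q ^ (k - 1) * s ^ u := by
              rw [geo_tsum hq0 hq1 (k - 1), geo_tsum hs0 hs1 u]
    _ = ∑ k ∈ Finset.Icc 1 N, r (σ k) * lam (σ k) * q ^ (k - 1) *
          ∑ u ∈ Finset.range k, s ^ u * Hfun σ lam k u := by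
        apply Finset.sum_congr rfl
        intro k _
        rw [Finset.mul_sum]
        apply Finset.sum_congr rfl
        intro u _
        ring
end

section
/- Let N ≥ 1, let r : {1,…,N} → [0,∞), let λ, λ̃ : {1,…,N} → [0,1] with λ_k ≤ λ̃_k for all k, and let q, q̃, s, s̃ ∈ [0,1] with q ≤ q̃ < 1 and q s ≤ q̃ s̃. If σ* is a permutation of {1,…,N} attaining the maximum of Revenue(σ; λ, q, s) over all permutations σ of {1,…,N}, then Revenue(σ*; λ, q, s) ≤ Revenue(σ*; λ̃, q̃, s̃). -/
open Finset

/-- The expected revenue of ranking policy `σ`. -/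
noncomputable def Revenue (N : ℕ) (σ : ℕ → ℕ) (r lam : ℕ → ℝ) (q s : ℝ) : ℝ :=
  ∑ k ∈ Finset.Icc 1 N, r (σ k) * lam (σ k) * q ^ (k - 1) *
    ∑ u ∈ Finset.range k, s ^ u * Hfun σ lam k u

/- ### Auxiliary machinery -/

lemma sum_sHfun (σ : ℕ → ℕ) (lam : ℕ → ℝ) (s : ℝ) (k : ℕ) (hk : 1 ≤ k) :
    ∑ u ∈ range k, s ^ u * Hfun σ lam k u
      = ∏ i ∈ Icc 1 (k - 1), (1 - lam (σ i) + s * lam (σ i)) := by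
  have hcard : (Icc 1 (k - 1)).card = k - 1 := by simp [Nat.card_Icc]
  have h1 : ∏ i ∈ Icc 1 (k - 1), (1 - lam (σ i) + s * lam (σ i))
      = ∏ i ∈ Icc 1 (k - 1), (s * lam (σ i) + (1 - lam (σ i))) := by
    apply prod_congr rfl; intro i _; ring
  rw [h1, Finset.prod_add, powerset_card_disjiUnion]
  erw [sum_disjiUnion]
  rw [hcard,
    show k - 1 + 1 = k from by omega]
  apply sum_congr rfl
  intro u _
  rw [Hfun, mul_sum]
  apply sum_congr rfl
  intro Q hQ
  have hQc : Q.card = u := (mem_powersetCard.1 hQ).2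
  rw [prod_mul_distrib, prod_const, hQc]
  ring

lemma Revenue_eq (N : ℕ) (σ : ℕ → ℕ) (r lam : ℕ → ℝ) (q s : ℝ) :
    Revenue N σ r lam q s
      = ∑ k ∈ Icc 1 N, r (σ k) * lam (σ k) *
          ∏ i ∈ Icc 1 (k - 1), (q * (1 - lam (σ i) + s * lam (σ i))) := by
  rw [Revenue]
  apply sum_congr rfl
  intro k hk
  have hk1 : 1 ≤ k := (mem_Icc.1 hk).1
  rw [sum_sHfun σ lam s k hk1, prod_mul_distrib, prod_const, Nat.card_Icc,
    show k - 1 + 1 - 1 = k - 1 from by omega]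
  ring

lemma split_sum (N m : ℕ) (h1 : 1 ≤ m) (hm : m ≤ N) (T f : ℕ → ℝ) :
    ∑ k ∈ Icc 1 N, T k * ∏ i ∈ Icc 1 (k - 1), f i
      = (∑ k ∈ Icc 1 (m - 1), T k * ∏ i ∈ Icc 1 (k - 1), f i)
        + (∏ i ∈ Icc 1 (m - 1), f i) *
          (T m + f m * ∑ k ∈ Icc (m + 1) N, T k * ∏ i ∈ Icc (m + 1) (k - 1), f i) := by
  have e1 : Icc 1 N = Icc 1 (m-1) ∪ Icc m N := by
    ext x; simp only [mem_Icc, mem_union]; omega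
  have d1 : Disjoint (Icc 1 (m-1)) (Icc m N) := by
    simp only [Finset.disjoint_left, mem_Icc]; omega
  have e2 : Icc m N = insert m (Icc (m+1) N) := by
    ext x; simp only [mem_Icc, mem_insert]; omega
  rw [e1, sum_union d1, e2, sum_insert (by simp)]
  congr 1
  rw [mul_add]
  congr 1
  rw [mul_comm]
  · rw [mul_sum, mul_sum]
    apply sum_congr rfl
    intro k hk
    have hk' : m + 1 ≤ k ∧ k ≤ N := by simpa using hk
    have e3 : Icc 1 (k-1) = (Icc 1 (m-1) ∪ {m}) ∪ Icc (m+1) (k-1) := by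
      ext x; simp only [mem_Icc, mem_union, mem_singleton]; omega
    have d2 : Disjoint (Icc 1 (m-1) ∪ {m}) (Icc (m+1) (k-1)) := by
      simp only [Finset.disjoint_left, mem_union, mem_Icc, mem_singleton]; omega
    have d3 : Disjoint (Icc 1 (m-1)) ({m} : Finset ℕ) := by
      simp only [Finset.disjoint_left, mem_Icc, mem_singleton]; omega
    rw [e3, prod_union d2, prod_union d3, prod_singleton]
    ring

/-- the cyclic shift moving position `m` to the end -/
def tau (N m : ℕ) (i : ℕ) : ℕ := if i < m then i else if i = N then m else i + 1

lemma tau_lt {N m i : ℕ} (h : i < m) : tau N m i = i := if_pos h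

lemma tau_N {N m : ℕ} (h : m ≤ N) : tau N m N = m := by
  unfold tau
  by_cases hNm : N < m
  · rw [if_pos hNm]; omega
  · rw [if_neg hNm, if_pos rfl]

lemma tau_mid {N m i : ℕ} (h1 : m ≤ i) (h2 : i ≠ N) : tau N m i = i + 1 := by
  unfold tau; rw [if_neg (by omega), if_neg h2]

lemma shift_prod (a b : ℕ) (f : ℕ → ℝ) :
    ∏ i ∈ Icc a b, f (i + 1) = ∏ i ∈ Icc (a + 1) (b + 1), f i := by
  refine prod_nbij' (fun i => i + 1) (fun i => i - 1) (fun x hx => ?_) (fun x hx => ?_)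
    (fun x hx => ?_) (fun x hx => ?_) (fun x hx => rfl) <;>
    simp only [mem_Icc] at hx ⊢ <;> omega

lemma shift_sum (a b : ℕ) (f : ℕ → ℝ) :
    ∑ k ∈ Icc a b, f (k + 1) = ∑ k ∈ Icc (a + 1) (b + 1), f k := by
  refine sum_nbij' (fun i => i + 1) (fun i => i - 1) (fun x hx => ?_) (fun x hx => ?_)
    (fun x hx => ?_) (fun x hx => ?_) (fun x hx => rfl) <;>
    simp only [mem_Icc] at hx ⊢ <;> omega

lemma exchange_sum (N m : ℕ) (h1 : 1 ≤ m) (hmN : m < N) (T f : ℕ → ℝ) :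
    ∑ k ∈ Icc 1 N, T (tau N m k) * ∏ i ∈ Icc 1 (k - 1), f (tau N m i)
      = (∑ k ∈ Icc 1 (m - 1), T k * ∏ i ∈ Icc 1 (k - 1), f i)
        + (∏ i ∈ Icc 1 (m - 1), f i) *
            (∑ k ∈ Icc (m + 1) N, T k * ∏ i ∈ Icc (m + 1) (k - 1), f i)
        + ((∏ i ∈ Icc 1 (m - 1), f i) * ∏ i ∈ Icc (m + 1) N, f i) * T m := by
  have e1 : Icc 1 N = (Icc 1 (m - 1) ∪ Icc m (N - 1)) ∪ {N} := by
    ext x; simp only [mem_Icc, mem_union, mem_singleton]; omega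
  have d1 : Disjoint (Icc 1 (m - 1) ∪ Icc m (N - 1)) ({N} : Finset ℕ) := by
    simp only [Finset.disjoint_left, mem_Icc, mem_union, mem_singleton]; omega
  have d2 : Disjoint (Icc 1 (m - 1)) (Icc m (N - 1)) := by
    simp only [Finset.disjoint_left, mem_Icc]; omega
  rw [e1, sum_union d1, sum_union d2, sum_singleton]
  have hsplit : ∀ k : ℕ, m ≤ k → k ≤ N →
      ∏ i ∈ Icc 1 (k - 1), f (tau N m i)
        = (∏ i ∈ Icc 1 (m - 1), f i) * ∏ i ∈ Icc (m + 1) k, f i := by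
    intro k hk hkN
    have e2 : Icc 1 (k - 1) = Icc 1 (m - 1) ∪ Icc m (k - 1) := by
      ext x; simp only [mem_Icc, mem_union]; omega
    have d3 : Disjoint (Icc 1 (m - 1)) (Icc m (k - 1)) := by
      simp only [Finset.disjoint_left, mem_Icc]; omega
    rw [e2, prod_union d3]
    congr 1
    · apply prod_congr rfl
      intro i hi
      have hi' : 1 ≤ i ∧ i ≤ m - 1 := by simpa using hi
      rw [tau_lt (by omega)]
    · have step : ∀ i ∈ Icc m (k - 1), f (tau N m i) = f (i + 1) := by
        intro i hi
        have hi' : m ≤ i ∧ i ≤ k - 1 := by simpa using hi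
        rw [tau_mid (by omega) (by omega)]
      rcases Nat.lt_or_ge k (m + 1) with hk' | hk'
      · have hkm : k = m := by omega
        subst hkm
        rw [Finset.Icc_eq_empty (by omega), Finset.Icc_eq_empty (by omega), prod_empty, prod_empty]
      · rw [prod_congr rfl step, shift_prod, show k - 1 + 1 = k from by omega]
  congr 1
  · congr 1
    · apply sum_congr rfl
      intro k hk
      have hk' : 1 ≤ k ∧ k ≤ m - 1 := by simpa using hk
      rw [tau_lt (by omega)]
      congr 1
      apply prod_congr rfl
      intro i hi
      have hi' : 1 ≤ i ∧ i ≤ k - 1 := by simpa using hi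
      rw [tau_lt (by omega)]
    · have key : ∀ k ∈ Icc m (N - 1),
          T (tau N m k) * ∏ i ∈ Icc 1 (k - 1), f (tau N m i)
            = (∏ i ∈ Icc 1 (m - 1), f i) *
                (T (k + 1) * ∏ i ∈ Icc (m + 1) (k + 1 - 1), f i) := by
        intro k hk
        have hk' : m ≤ k ∧ k ≤ N - 1 := by simpa using hk
        rw [tau_mid (by omega) (by omega), hsplit k (by omega) (by omega)]
        simp only [show k + 1 - 1 = k from by omega]
        ring
      rw [sum_congr rfl key,
        shift_sum m (N - 1) (fun k' => (∏ i ∈ Icc 1 (m - 1), f i) *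
          (T k' * ∏ i ∈ Icc (m + 1) (k' - 1), f i)),
        show N - 1 + 1 = N from by omega, mul_sum]
  · rw [tau_N (by omega), hsplit N (by omega) le_rfl]
    ring

/-- mixed purchase probabilities: positions `≤ m` upgraded -/
def Lmix (L LT : ℕ → ℝ) (m i : ℕ) : ℝ := if i ≤ m then LT i else L i

lemma Lmix_le {L LT : ℕ → ℝ} {m i : ℕ} (h : i ≤ m) : Lmix L LT m i = LT i := if_pos h

lemma Lmix_gt {L LT : ℕ → ℝ} {m i : ℕ} (h : m < i) : Lmix L LT m i = L i := if_neg (by omega)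

lemma sum_prod_congr (a b : ℕ) (T1 T2 F1 F2 : ℕ → ℝ)
    (hT : ∀ k ∈ Icc a b, T1 k = T2 k) (hF : ∀ i ∈ Icc a b, F1 i = F2 i) :
    ∑ k ∈ Icc a b, T1 k * ∏ i ∈ Icc a (k - 1), F1 i
      = ∑ k ∈ Icc a b, T2 k * ∏ i ∈ Icc a (k - 1), F2 i := by
  apply sum_congr rfl
  intro k hk
  have hk' : a ≤ k ∧ k ≤ b := by simpa using hk
  rw [hT k hk]
  congr 1
  apply prod_congr rfl
  intro i hi
  have hi' : a ≤ i ∧ i ≤ k - 1 := by simpa using hi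
  exact hF i (by simp only [mem_Icc]; omega)
set_option maxHeartbeats 1000000 in
lemma step (N m : ℕ) (hm1 : 1 ≤ m) (hmN : m ≤ N) (R L LT : ℕ → ℝ) (q s : ℝ)
    (hR : ∀ k ∈ Icc 1 N, 0 ≤ R k)
    (hL : ∀ k ∈ Icc 1 N, 0 ≤ L k ∧ L k ≤ 1)
    (hLT : ∀ k ∈ Icc 1 N, 0 ≤ LT k ∧ LT k ≤ 1)
    (hle : ∀ k ∈ Icc 1 N, L k ≤ LT k)
    (hq0 : 0 ≤ q) (hq1 : q < 1) (hs0 : 0 ≤ s) (hs1 : s ≤ 1)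
    (hexch : m < N →
      ∑ k ∈ Icc 1 N, R (tau N m k) * L (tau N m k) *
          ∏ i ∈ Icc 1 (k - 1), (q * (1 - L (tau N m i) + s * L (tau N m i)))
        ≤ ∑ k ∈ Icc 1 N, R k * L k * ∏ i ∈ Icc 1 (k - 1), (q * (1 - L i + s * L i))) :
    ∑ k ∈ Icc 1 N, R k * Lmix L LT (m - 1) k *
        ∏ i ∈ Icc 1 (k - 1), (q * (1 - Lmix L LT (m - 1) i + s * Lmix L LT (m - 1) i))
      ≤ ∑ k ∈ Icc 1 N, R k * Lmix L LT m k *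
        ∏ i ∈ Icc 1 (k - 1), (q * (1 - Lmix L LT m i + s * Lmix L LT m i)) := by
  -- canonical pieces
  set AT : ℝ := ∑ k ∈ Icc 1 (m - 1), R k * LT k *
      ∏ i ∈ Icc 1 (k - 1), (q * (1 - LT i + s * LT i)) with hATdef
  set C : ℝ := ∏ i ∈ Icc 1 (m - 1), (q * (1 - LT i + s * LT i)) with hCdef
  set C' : ℝ := ∏ i ∈ Icc 1 (m - 1), (q * (1 - L i + s * L i)) with hC'def
  set B : ℝ := ∑ k ∈ Icc (m + 1) N, R k * L k *
      ∏ i ∈ Icc (m + 1) (k - 1), (q * (1 - L i + s * L i)) with hBdef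
  clear_value AT C C' B
  -- bounds at m
  have hmIcc : m ∈ Icc 1 N := by simp only [mem_Icc]; omega
  obtain ⟨hLm0, hLm1⟩ := hL m hmIcc
  obtain ⟨hLTm0, hLTm1⟩ := hLT m hmIcc
  have hlem := hle m hmIcc
  have hRm := hR m hmIcc
  -- nonnegativity
  have hfL : ∀ i ∈ Icc 1 N, 0 ≤ q * (1 - L i + s * L i) := by
    intro i hi
    obtain ⟨h0, h1⟩ := hL i hi
    exact mul_nonneg hq0 (by nlinarith [mul_nonneg hs0 h0])
  have hfLT : ∀ i ∈ Icc 1 N, 0 ≤ q * (1 - LT i + s * LT i) := by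
    intro i hi
    obtain ⟨h0, h1⟩ := hLT i hi
    exact mul_nonneg hq0 (by nlinarith [mul_nonneg hs0 h0])
  have hC0 : 0 ≤ C := by
    rw [hCdef]
    apply prod_nonneg
    intro i hi
    have hi' : 1 ≤ i ∧ i ≤ m - 1 := by simpa using hi
    exact hfLT i (by simp only [mem_Icc]; omega)
  have hC'0 : 0 ≤ C' := by
    rw [hC'def]
    apply prod_nonneg
    intro i hi
    have hi' : 1 ≤ i ∧ i ≤ m - 1 := by simpa using hi
    exact hfL i (by simp only [mem_Icc]; omega)
  have hB0 : 0 ≤ B := by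
    rw [hBdef]
    apply sum_nonneg
    intro k hk
    have hk' : m + 1 ≤ k ∧ k ≤ N := by simpa using hk
    have hkIcc : k ∈ Icc 1 N := by simp only [mem_Icc]; omega
    apply mul_nonneg (mul_nonneg (hR k hkIcc) (hL k hkIcc).1)
    apply prod_nonneg
    intro i hi
    have hi' : m + 1 ≤ i ∧ i ≤ k - 1 := by simpa using hi
    exact hfL i (by simp only [mem_Icc]; omega)
  -- rewrite both sides via split_sum and congruences
  have eqA : ∑ k ∈ Icc 1 N, R k * Lmix L LT (m - 1) k *
        ∏ i ∈ Icc 1 (k - 1), (q * (1 - Lmix L LT (m - 1) i + s * Lmix L LT (m - 1) i))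
      = AT + C * (R m * L m + (q * (1 - L m + s * L m)) * B) := by
    refine (split_sum N m hm1 hmN (fun k => R k * Lmix L LT (m - 1) k)
      (fun i => q * (1 - Lmix L LT (m - 1) i + s * Lmix L LT (m - 1) i))).trans ?_
    rw [hATdef, hCdef, hBdef]
    congr 1
    · apply sum_prod_congr
      · intro k hk
        have hk' : 1 ≤ k ∧ k ≤ m - 1 := by simpa using hk
        rw [Lmix_le (show k ≤ m - 1 by omega)]
      · intro i hi
        have hi' : 1 ≤ i ∧ i ≤ m - 1 := by simpa using hi
        rw [Lmix_le (show i ≤ m - 1 by omega)]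
    · have hCC : ∏ i ∈ Icc 1 (m - 1),
          (q * (1 - Lmix L LT (m - 1) i + s * Lmix L LT (m - 1) i))
          = ∏ i ∈ Icc 1 (m - 1), (q * (1 - LT i + s * LT i)) := by
        apply prod_congr rfl
        intro i hi
        have hi' : 1 ≤ i ∧ i ≤ m - 1 := by simpa using hi
        rw [Lmix_le (show i ≤ m - 1 by omega)]
      have hBB : ∑ k ∈ Icc (m + 1) N, R k * Lmix L LT (m - 1) k *
          ∏ i ∈ Icc (m + 1) (k - 1),
            (q * (1 - Lmix L LT (m - 1) i + s * Lmix L LT (m - 1) i))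
          = ∑ k ∈ Icc (m + 1) N, R k * L k *
              ∏ i ∈ Icc (m + 1) (k - 1), (q * (1 - L i + s * L i)) := by
        apply sum_prod_congr
        · intro k hk
          have hk' : m + 1 ≤ k ∧ k ≤ N := by simpa using hk
          rw [Lmix_gt (show m - 1 < k by omega)]
        · intro i hi
          have hi' : m + 1 ≤ i ∧ i ≤ N := by simpa using hi
          rw [Lmix_gt (show m - 1 < i by omega)]
      rw [hCC, hBB, Lmix_gt (show m - 1 < m by omega)]
  have eqB : ∑ k ∈ Icc 1 N, R k * Lmix L LT m k *
        ∏ i ∈ Icc 1 (k - 1), (q * (1 - Lmix L LT m i + s * Lmix L LT m i))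
      = AT + C * (R m * LT m + (q * (1 - LT m + s * LT m)) * B) := by
    refine (split_sum N m hm1 hmN (fun k => R k * Lmix L LT m k)
      (fun i => q * (1 - Lmix L LT m i + s * Lmix L LT m i))).trans ?_
    rw [hATdef, hCdef, hBdef]
    congr 1
    · apply sum_prod_congr
      · intro k hk
        have hk' : 1 ≤ k ∧ k ≤ m - 1 := by simpa using hk
        rw [Lmix_le (show k ≤ m by omega)]
      · intro i hi
        have hi' : 1 ≤ i ∧ i ≤ m - 1 := by simpa using hi
        rw [Lmix_le (show i ≤ m by omega)]
    · have hCC : ∏ i ∈ Icc 1 (m - 1),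
          (q * (1 - Lmix L LT m i + s * Lmix L LT m i))
          = ∏ i ∈ Icc 1 (m - 1), (q * (1 - LT i + s * LT i)) := by
        apply prod_congr rfl
        intro i hi
        have hi' : 1 ≤ i ∧ i ≤ m - 1 := by simpa using hi
        rw [Lmix_le (show i ≤ m by omega)]
      have hBB : ∑ k ∈ Icc (m + 1) N, R k * Lmix L LT m k *
          ∏ i ∈ Icc (m + 1) (k - 1),
            (q * (1 - Lmix L LT m i + s * Lmix L LT m i))
          = ∑ k ∈ Icc (m + 1) N, R k * L k *
              ∏ i ∈ Icc (m + 1) (k - 1), (q * (1 - L i + s * L i)) := by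
        apply sum_prod_congr
        · intro k hk
          have hk' : m + 1 ≤ k ∧ k ≤ N := by simpa using hk
          rw [Lmix_gt (show m < k by omega)]
        · intro i hi
          have hi' : m + 1 ≤ i ∧ i ≤ N := by simpa using hi
          rw [Lmix_gt (show m < i by omega)]
      rw [hCC, hBB, Lmix_le le_rfl]
  rw [eqA, eqB]
  -- now the core inequality
  rcases eq_or_lt_of_le hmN with hmeq | hmlt
  · -- m = N : B = 0
    have hBz : B = 0 := by
      rw [hBdef, show Icc (m + 1) N = ∅ from Finset.Icc_eq_empty (by omega), sum_empty]
    rw [hBz]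
    have hin : R m * L m + q * (1 - L m + s * L m) * 0
        ≤ R m * LT m + q * (1 - LT m + s * LT m) * 0 := by
      nlinarith [mul_le_mul_of_nonneg_left hlem hRm]
    exact add_le_add_right (mul_le_mul_of_nonneg_left hin hC0) AT
  · -- m < N : use the exchange argument
    -- split of the pure-L sum
    have eqS : ∑ k ∈ Icc 1 N, R k * L k * ∏ i ∈ Icc 1 (k - 1), (q * (1 - L i + s * L i))
        = (∑ k ∈ Icc 1 (m - 1), R k * L k * ∏ i ∈ Icc 1 (k - 1), (q * (1 - L i + s * L i)))
          + C' * (R m * L m + (q * (1 - L m + s * L m)) * B) := by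
      rw [hC'def, hBdef]
      exact split_sum N m hm1 hmN (fun k => R k * L k) (fun i => q * (1 - L i + s * L i))
    have eqX : ∑ k ∈ Icc 1 N, R (tau N m k) * L (tau N m k) *
          ∏ i ∈ Icc 1 (k - 1), (q * (1 - L (tau N m i) + s * L (tau N m i)))
        = (∑ k ∈ Icc 1 (m - 1), R k * L k * ∏ i ∈ Icc 1 (k - 1), (q * (1 - L i + s * L i)))
          + C' * B
          + (C' * ∏ i ∈ Icc (m + 1) N, (q * (1 - L i + s * L i))) * (R m * L m) := by
      rw [hC'def, hBdef]
      exact exchange_sum N m hm1 hmlt (fun k => R k * L k) (fun i => q * (1 - L i + s * L i))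
    have hCtail : 0 ≤ ∏ i ∈ Icc (m + 1) N, (q * (1 - L i + s * L i)) := by
      apply prod_nonneg
      intro i hi
      have hi' : m + 1 ≤ i ∧ i ≤ N := by simpa using hi
      exact hfL i (by simp only [mem_Icc]; omega)
    have hX := hexch hmlt
    rw [eqS, eqX] at hX
    -- exchange inequality: C' * (L m * R m) ≥ C' * (1 - fL m) * B
    have hkey : C' * (1 - q * (1 - L m + s * L m)) * B ≤ C' * (R m * L m) := by
      nlinarith [mul_nonneg (mul_nonneg hC'0 hCtail) (mul_nonneg hRm hLm0)]
    -- conclude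
    rcases eq_or_lt_of_le hC0 with hCz | hCpos
    · rw [← hCz]; ring_nf; exact le_rfl
    · -- C > 0 implies C' > 0
      have hC'pos : 0 < C' := by
        rcases eq_or_lt_of_le hC'0 with hC'z | h; swap
        · exact h
        exfalso
        have hzz : ∏ i ∈ Icc 1 (m - 1), (q * (1 - L i + s * L i)) = 0 := by
          rw [← hC'def, ← hC'z]
        obtain ⟨i, hi, hiz⟩ := prod_eq_zero_iff.mp hzz
        have hi' : 1 ≤ i ∧ i ≤ m - 1 := by simpa using hi
        have hiIcc : i ∈ Icc 1 N := by simp only [mem_Icc]; omega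
        obtain ⟨hLi0, hLi1⟩ := hL i hiIcc
        obtain ⟨hLTi0, hLTi1⟩ := hLT i hiIcc
        have hlei := hle i hiIcc
        -- f L i = 0 implies f LT i = 0
        have hZT : q * (1 - LT i + s * LT i) = 0 := by
          have hiz' : q * (1 - L i + s * L i) = 0 := hiz
          rcases mul_eq_zero.mp hiz' with h0 | h0
          · rw [h0, zero_mul]
          · -- 1 - L i + s * L i = 0 with bounds forces L i = 1, s = 0
            have hsl : 0 ≤ s * L i := mul_nonneg hs0 hLi0
            have hs0' : s * L i = 0 := by linarith
            have hL1 : L i = 1 := by linarith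
            have hsz : s = 0 := by
              rcases mul_eq_zero.mp hs0' with h | h
              · exact h
              · rw [hL1] at h; norm_num at h
            have hLT1 : LT i = 1 := le_antisymm hLTi1 (hL1 ▸ hlei)
            rw [hsz, hLT1]; ring
        have : C = 0 := by rw [hCdef]; exact prod_eq_zero hi hZT
        rw [this] at hCpos; exact lt_irrefl 0 hCpos
      -- from hkey with C' > 0 : L m * R m ≥ (1 - fL m) * B
      have h1 : (1 - q * (1 - L m + s * L m)) * B ≤ R m * L m := by
        have := (mul_le_mul_iff_right₀ hC'pos).mp (by linarith [hkey] : C' * ((1 - q * (1 - L m + s * L m)) * B) ≤ C' * (R m * L m))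
        exact this
      have hfm_le : q * (1 - L m + s * L m) ≤ q := by
        nlinarith [mul_nonneg (mul_nonneg hq0 hLm0) (sub_nonneg.mpr hs1)]
      -- derive R m ≥ q * (1 - s) * B
      have h2 : q * (1 - s) * B ≤ R m := by
        rcases eq_or_lt_of_le hLm0 with hLz | hLpos
        · -- L m = 0 : B = 0
          have hBz : B = 0 := by
            have : (1 - q) * B ≤ 0 := by
              rw [← hLz] at h1
              nlinarith
            nlinarith
          rw [hBz]; simpa using hRm
        · -- L m > 0
          have h3 : q * (1 - s) * L m * B ≤ (1 - q * (1 - L m + s * L m)) * B := by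
            nlinarith
          have h4 : q * (1 - s) * L m * B ≤ R m * L m := le_trans h3 h1
          nlinarith
      -- final
      have hinner : R m * L m + q * (1 - L m + s * L m) * B
          ≤ R m * LT m + q * (1 - LT m + s * LT m) * B := by
        nlinarith [mul_le_mul_of_nonneg_left hlem hRm,
          mul_nonneg (mul_nonneg hq0 (sub_nonneg.mpr hs1)) hB0]
      exact add_le_add_right (mul_le_mul_of_nonneg_left hinner hC0) AT

/-- the optimal revenue is monotone in the parameters: if `λ ≤ λ̃`,
`q ≤ q̃ < 1` and `qs ≤ q̃s̃`, then `Revenue(σ*; λ, q, s) ≤ Revenue(σ*; λ̃, q̃, s̃)`. -/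
theorem stmt7 (N : ℕ) (hN : 1 ≤ N) (r lam lamT : ℕ → ℝ)
    (hr : ∀ k ∈ Set.Icc 1 N, 0 ≤ r k)
    (hlam : ∀ k ∈ Set.Icc 1 N, lam k ∈ Set.Icc (0 : ℝ) 1)
    (hlamT : ∀ k ∈ Set.Icc 1 N, lamT k ∈ Set.Icc (0 : ℝ) 1)
    (hle : ∀ k ∈ Set.Icc 1 N, lam k ≤ lamT k)
    (q qT s sT : ℝ)
    (hq : q ∈ Set.Icc (0 : ℝ) 1) (hqT : qT ∈ Set.Icc (0 : ℝ) 1)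
    (hs : s ∈ Set.Icc (0 : ℝ) 1) (hsT : sT ∈ Set.Icc (0 : ℝ) 1)
    (hqle : q ≤ qT) (hqT1 : qT < 1) (hqs : q * s ≤ qT * sT)
    (σstar : ℕ → ℕ) (hσstar : Set.BijOn σstar (Set.Icc 1 N) (Set.Icc 1 N))
    (hopt : ∀ σ : ℕ → ℕ, Set.BijOn σ (Set.Icc 1 N) (Set.Icc 1 N) →
      Revenue N σ r lam q s ≤ Revenue N σstar r lam q s) :
    Revenue N σstar r lam q s ≤ Revenue N σstar r lamT qT sT := by
  obtain ⟨hq0, hq1⟩ := hq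
  obtain ⟨hqT0, _⟩ := hqT
  obtain ⟨hs0, hs1⟩ := hs
  obtain ⟨hsT0, hsT1⟩ := hsT
  have hq1' : q < 1 := lt_of_le_of_lt hqle hqT1
  -- membership transfer
  have hmem : ∀ k ∈ Icc 1 N, σstar k ∈ Set.Icc 1 N := by
    intro k hk
    exact hσstar.mapsTo (by simpa [Set.mem_Icc] using (mem_Icc.mp hk))
  have hR' : ∀ k ∈ Icc 1 N, 0 ≤ (fun k => r (σstar k)) k := fun k hk => hr _ (hmem k hk)
  have hL' : ∀ k ∈ Icc 1 N, 0 ≤ (fun k => lam (σstar k)) k ∧ (fun k => lam (σstar k)) k ≤ 1 :=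
    fun k hk => hlam _ (hmem k hk)
  have hLT' : ∀ k ∈ Icc 1 N, 0 ≤ (fun k => lamT (σstar k)) k ∧ (fun k => lamT (σstar k)) k ≤ 1 :=
    fun k hk => hlamT _ (hmem k hk)
  have hle' : ∀ k ∈ Icc 1 N, (fun k => lam (σstar k)) k ≤ (fun k => lamT (σstar k)) k :=
    fun k hk => hle _ (hmem k hk)
  -- the exchange inequality from optimality of σstar
  have hexch : ∀ m : ℕ, 1 ≤ m → m < N →
      ∑ k ∈ Icc 1 N, (fun k => r (σstar k)) (tau N m k) * (fun k => lam (σstar k)) (tau N m k) *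
          ∏ i ∈ Icc 1 (k - 1),
            (q * (1 - (fun k => lam (σstar k)) (tau N m i) + s * (fun k => lam (σstar k)) (tau N m i)))
        ≤ ∑ k ∈ Icc 1 N, (fun k => r (σstar k)) k * (fun k => lam (σstar k)) k *
            ∏ i ∈ Icc 1 (k - 1),
              (q * (1 - (fun k => lam (σstar k)) i + s * (fun k => lam (σstar k)) i)) := by
    intro m hm1 hmN
    have htau : Set.BijOn (tau N m) (Set.Icc 1 N) (Set.Icc 1 N) := by
      refine ⟨?_, ?_, ?_⟩
      · intro x hx
        simp only [Set.mem_Icc] at hx ⊢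
        unfold tau; split_ifs <;> omega
      · intro a ha b hb hab
        simp only [Set.mem_Icc] at ha hb
        unfold tau at hab; split_ifs at hab <;> omega
      · intro y hy
        simp only [Set.mem_Icc] at hy
        by_cases hym : y < m
        · exact ⟨y, Set.mem_Icc.mpr (by omega), tau_lt hym⟩
        · by_cases hye : y = m
          · exact ⟨N, Set.mem_Icc.mpr (by omega), by rw [hye]; exact tau_N (by omega)⟩
          · refine ⟨y - 1, Set.mem_Icc.mpr (by omega), ?_⟩
            rw [tau_mid (by omega) (by omega)]
            omega
    have h := hopt (σstar ∘ tau N m) (hσstar.comp htau)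
    rw [Revenue_eq, Revenue_eq] at h
    exact h
  -- telescoping over positions
  have hstep := fun (m : ℕ) (hm1 : 1 ≤ m) (hmN : m ≤ N) =>
    step N m hm1 hmN (fun k => r (σstar k)) (fun k => lam (σstar k)) (fun k => lamT (σstar k))
      q s hR' hL' hLT' hle' hq0 hq1' hs0 hs1
      (fun hlt => hexch m hm1 hlt)
  have mono : ∀ m : ℕ, m ≤ N →
      ∑ k ∈ Icc 1 N, (fun k => r (σstar k)) k *
          Lmix (fun k => lam (σstar k)) (fun k => lamT (σstar k)) 0 k *
          ∏ i ∈ Icc 1 (k - 1),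
            (q * (1 - Lmix (fun k => lam (σstar k)) (fun k => lamT (σstar k)) 0 i
              + s * Lmix (fun k => lam (σstar k)) (fun k => lamT (σstar k)) 0 i))
      ≤ ∑ k ∈ Icc 1 N, (fun k => r (σstar k)) k *
          Lmix (fun k => lam (σstar k)) (fun k => lamT (σstar k)) m k *
          ∏ i ∈ Icc 1 (k - 1),
            (q * (1 - Lmix (fun k => lam (σstar k)) (fun k => lamT (σstar k)) m i
              + s * Lmix (fun k => lam (σstar k)) (fun k => lamT (σstar k)) m i)) := by
    intro m
    induction m with
    | zero => intro _; exact le_rfl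
    | succ n ih =>
      intro hn
      refine (ih (by omega)).trans ?_
      have h := hstep (n + 1) (by omega) hn
      simpa only [Nat.add_sub_cancel] using h
  rw [Revenue_eq, Revenue_eq]
  calc
    ∑ k ∈ Icc 1 N, r (σstar k) * lam (σstar k) *
        ∏ i ∈ Icc 1 (k - 1), (q * (1 - lam (σstar i) + s * lam (σstar i)))
      = ∑ k ∈ Icc 1 N, (fun k => r (σstar k)) k *
          Lmix (fun k => lam (σstar k)) (fun k => lamT (σstar k)) 0 k *
          ∏ i ∈ Icc 1 (k - 1),
            (q * (1 - Lmix (fun k => lam (σstar k)) (fun k => lamT (σstar k)) 0 i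
              + s * Lmix (fun k => lam (σstar k)) (fun k => lamT (σstar k)) 0 i)) := by
        apply sum_prod_congr
        · intro k hk
          have hk' : 1 ≤ k ∧ k ≤ N := by simpa using hk
          rw [Lmix_gt (show 0 < k by omega)]
        · intro i hi
          have hi' : 1 ≤ i ∧ i ≤ N := by simpa using hi
          rw [Lmix_gt (show 0 < i by omega)]
    _ ≤ ∑ k ∈ Icc 1 N, (fun k => r (σstar k)) k *
          Lmix (fun k => lam (σstar k)) (fun k => lamT (σstar k)) N k *
          ∏ i ∈ Icc 1 (k - 1),
            (q * (1 - Lmix (fun k => lam (σstar k)) (fun k => lamT (σstar k)) N i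
              + s * Lmix (fun k => lam (σstar k)) (fun k => lamT (σstar k)) N i)) := mono N le_rfl
    _ = ∑ k ∈ Icc 1 N, r (σstar k) * lamT (σstar k) *
          ∏ i ∈ Icc 1 (k - 1), (q * (1 - lamT (σstar i) + s * lamT (σstar i))) := by
        apply sum_prod_congr
        · intro k hk
          have hk' : 1 ≤ k ∧ k ≤ N := by simpa using hk
          rw [Lmix_le (show k ≤ N by omega)]
        · intro i hi
          have hi' : 1 ≤ i ∧ i ≤ N := by simpa using hi
          rw [Lmix_le (show i ≤ N by omega)]
    _ ≤ ∑ k ∈ Icc 1 N, r (σstar k) * lamT (σstar k) *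
          ∏ i ∈ Icc 1 (k - 1), (qT * (1 - lamT (σstar i) + sT * lamT (σstar i))) := by
        apply sum_le_sum
        intro k hk
        have hk' : 1 ≤ k ∧ k ≤ N := by simpa using hk
        obtain ⟨hLT0, hLT1⟩ := hlamT _ (hmem k hk)
        refine mul_le_mul_of_nonneg_left ?_ (mul_nonneg (hr _ (hmem k hk)) hLT0)
        apply prod_le_prod
        · intro i hi
          have hi' : 1 ≤ i ∧ i ≤ k - 1 := by simpa using hi
          have hiI : i ∈ Icc 1 N := by simp only [mem_Icc]; omega
          obtain ⟨h0, h1⟩ := hlamT _ (hmem i hiI)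
          exact mul_nonneg hq0 (by nlinarith [mul_nonneg hs0 h0])
        · intro i hi
          have hi' : 1 ≤ i ∧ i ≤ k - 1 := by simpa using hi
          have hiI : i ∈ Icc 1 N := by simp only [mem_Icc]; omega
          obtain ⟨h0, h1⟩ := hlamT _ (hmem i hiI)
          nlinarith [mul_nonneg (sub_nonneg.mpr hqle) (sub_nonneg.mpr h1),
            mul_nonneg (sub_nonneg.mpr hqs) h0]
end

section
/- Let N ≥ 1, ε_Q ∈ (0,1), let σ be any permutation of {1,…,N}, let r : {1,…,N} → [0, r_max] for some r_max ≥ 0, let λ, λ̃ : {1,…,N} → [0,1] with λ_k ≤ λ̃_k for all k, and let q, q̃, s, s̃ ∈ [0,1] with q ≤ q̃ ≤ 1 − ε_Q and q s ≤ q̃ s̃. Then Revenue(σ; λ̃, q̃, s̃) − Revenue(σ; λ, q, s) ≤ (r_max / ε_Q) · Σ_{k=1}^{N} ( |q − q̃| (1 − λ_{σ_k}) + 3 |λ_{σ_k} − λ̃_{σ_k}| + |q s − q̃ s̃| λ_{σ_k} ) · A_σ(k; q, s, λ). -/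
open Finset

/-- `Afun σ lam q s k = A_σ(k; q, s, λ) = q^{k-1} Σ_{u=0}^{k-1} s^u H_σ(k,u;λ)`. -/
noncomputable def Afun (σ : ℕ → ℕ) (lam : ℕ → ℝ) (q s : ℝ) (k : ℕ) : ℝ :=
  q ^ (k - 1) * ∑ u ∈ Finset.range k, s ^ u * Hfun σ lam k u

lemma helper_mul (x R a b : ℝ) (hxR : x ≤ R) (hR : 0 ≤ R) (ha : 0 ≤ a) (hab : a ≤ b) :
    x * a ≤ R * b := by
  rcases le_or_gt 0 x with h | h
  · exact mul_le_mul hxR hab ha hR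
  · nlinarith

lemma my_geom_le (ε : ℝ) (hε0 : 0 < ε) (hε1 : ε ≤ 1) (n : ℕ) :
    ∑ i ∈ Finset.range n, (1 - ε) ^ i ≤ 1 / ε := by
  have key : ε * ∑ i ∈ Finset.range n, (1 - ε) ^ i = 1 - (1 - ε) ^ n := by
    induction n with
    | zero => simp
    | succ n ih =>
      rw [Finset.sum_range_succ, mul_add, ih, pow_succ]
      ring
  have hpow : 0 ≤ (1 - ε) ^ n := pow_nonneg (by linarith) n
  rw [le_div_iff₀ hε0]
  nlinarith

lemma prod_diff_le (ε : ℝ) (g gT d : ℕ → ℝ) :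
    ∀ m : ℕ, (∀ i ∈ Finset.Icc 1 m, 0 ≤ g i) →
      (∀ i ∈ Finset.Icc 1 m, 0 ≤ gT i) → (∀ i ∈ Finset.Icc 1 m, gT i ≤ 1 - ε) →
      (∀ i ∈ Finset.Icc 1 m, gT i - g i ≤ d i) → (∀ i ∈ Finset.Icc 1 m, 0 ≤ d i) →
      (∏ i ∈ Finset.Icc 1 m, gT i) - ∏ i ∈ Finset.Icc 1 m, g i ≤
        ∑ j ∈ Finset.Icc 1 m, (∏ i ∈ Finset.Icc 1 (j - 1), g i) * d j * (1 - ε) ^ (m - j)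
  | 0, _, _, _, _, _ => by simp
  | (m + 1), hg, hgT, hgT1, hd, hd0 => by
    have hsub : ∀ i ∈ Finset.Icc 1 m, i ∈ Finset.Icc 1 (m + 1) := by
      intro i hi; simp only [Finset.mem_Icc] at *; omega
    have hmem : (m + 1) ∈ Finset.Icc 1 (m + 1) := by simp
    have IH := prod_diff_le ε g gT d m (fun i hi => hg i (hsub i hi))
      (fun i hi => hgT i (hsub i hi)) (fun i hi => hgT1 i (hsub i hi))
      (fun i hi => hd i (hsub i hi)) (fun i hi => hd0 i (hsub i hi))
    have hε1' : (0:ℝ) ≤ 1 - ε := le_trans (hgT (m+1) hmem) (hgT1 (m+1) hmem)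
    have hS0 : 0 ≤ ∑ j ∈ Finset.Icc 1 m, (∏ i ∈ Finset.Icc 1 (j - 1), g i) * d j * (1 - ε) ^ (m - j) := by
      refine Finset.sum_nonneg fun j hj => ?_
      have hj' : j - 1 ≤ m := by simp only [Finset.mem_Icc] at hj; omega
      refine mul_nonneg (mul_nonneg (Finset.prod_nonneg fun i hi => ?_) (hd0 j (hsub j hj))) (pow_nonneg hε1' _)
      refine hg i ?_
      simp only [Finset.mem_Icc] at *; omega
    have hP0 : 0 ≤ ∏ i ∈ Finset.Icc 1 m, g i :=
      Finset.prod_nonneg fun i hi => hg i (hsub i hi)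
    rw [Finset.prod_Icc_succ_top (Nat.le_add_left 1 m), Finset.prod_Icc_succ_top (Nat.le_add_left 1 m),
      Finset.sum_Icc_succ_top (Nat.le_add_left 1 m)]
    have step1 : (∏ i ∈ Finset.Icc 1 m, gT i) * gT (m+1) - (∏ i ∈ Finset.Icc 1 m, g i) * g (m+1)
        = ((∏ i ∈ Finset.Icc 1 m, gT i) - ∏ i ∈ Finset.Icc 1 m, g i) * gT (m+1)
          + (∏ i ∈ Finset.Icc 1 m, g i) * (gT (m+1) - g (m+1)) := by ring
    rw [step1]
    have b1 : ((∏ i ∈ Finset.Icc 1 m, gT i) - ∏ i ∈ Finset.Icc 1 m, g i) * gT (m+1)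
        ≤ (∑ j ∈ Finset.Icc 1 m, (∏ i ∈ Finset.Icc 1 (j - 1), g i) * d j * (1 - ε) ^ (m - j)) * (1 - ε) :=
      helper_mul _ _ _ _ IH hS0 (hgT (m+1) hmem) (hgT1 (m+1) hmem)
    have b2 : (∏ i ∈ Finset.Icc 1 m, g i) * (gT (m+1) - g (m+1))
        ≤ (∏ i ∈ Finset.Icc 1 m, g i) * d (m+1) :=
      mul_le_mul_of_nonneg_left (hd (m+1) hmem) hP0
    have hEq : (∑ j ∈ Finset.Icc 1 m, (∏ i ∈ Finset.Icc 1 (j - 1), g i) * d j * (1 - ε) ^ (m - j)) * (1 - ε)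
        = ∑ j ∈ Finset.Icc 1 m, (∏ i ∈ Finset.Icc 1 (j - 1), g i) * d j * (1 - ε) ^ (m + 1 - j) := by
      rw [Finset.sum_mul]
      refine Finset.sum_congr rfl fun j hj => ?_
      have hj' : j ≤ m := by simp only [Finset.mem_Icc] at hj; omega
      have : m + 1 - j = (m - j) + 1 := by omega
      rw [this, pow_succ]; ring
    have : (m + 1) - 1 = m := by omega
    rw [this]
    have h3 : (m + 1) - (m + 1) = 0 := by omega
    rw [h3, pow_zero, mul_one]
    linarith [hEq ▸ b1]

lemma sum_s_H (σ : ℕ → ℕ) (lam : ℕ → ℝ) (s : ℝ) (k : ℕ) (hk : 1 ≤ k) :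
    ∑ u ∈ Finset.range k, s ^ u * Hfun σ lam k u
      = ∏ i ∈ Finset.Icc 1 (k - 1), (1 - lam (σ i) + s * lam (σ i)) := by
  have hcard : (Finset.Icc 1 (k - 1)).card = k - 1 := by
    rw [Nat.card_Icc]; omega
  have hrange : k = (Finset.Icc 1 (k - 1)).card + 1 := by omega
  calc ∑ u ∈ Finset.range k, s ^ u * Hfun σ lam k u
      = ∑ u ∈ Finset.range ((Finset.Icc 1 (k - 1)).card + 1),
          ∑ Q ∈ (Finset.Icc 1 (k - 1)).powersetCard u,
            (∏ i ∈ Q, s * lam (σ i)) * ∏ i ∈ Finset.Icc 1 (k - 1) \ Q, (1 - lam (σ i)) := by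
        rw [← hrange]
        refine Finset.sum_congr rfl fun u _ => ?_
        rw [Hfun, Finset.mul_sum]
        refine Finset.sum_congr rfl fun Q hQ => ?_
        have hQc : Q.card = u := (Finset.mem_powersetCard.mp hQ).2
        rw [Finset.prod_mul_distrib, Finset.prod_const, hQc]
        ring
    _ = ∑ Q ∈ (Finset.Icc 1 (k - 1)).powerset,
          (∏ i ∈ Q, s * lam (σ i)) * ∏ i ∈ Finset.Icc 1 (k - 1) \ Q, (1 - lam (σ i)) :=
        (Finset.sum_powerset _ _).symm
    _ = ∏ i ∈ Finset.Icc 1 (k - 1), (s * lam (σ i) + (1 - lam (σ i))) :=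
        (Finset.prod_add _ _ _).symm
    _ = ∏ i ∈ Finset.Icc 1 (k - 1), (1 - lam (σ i) + s * lam (σ i)) :=
        Finset.prod_congr rfl fun i _ => by ring

lemma Afun_eq (σ : ℕ → ℕ) (lam : ℕ → ℝ) (q s : ℝ) (k : ℕ) (hk : 1 ≤ k) :
    Afun σ lam q s k = ∏ i ∈ Finset.Icc 1 (k - 1), (q * (1 - lam (σ i) + s * lam (σ i))) := by
  rw [Afun, sum_s_H σ lam s k hk, Finset.prod_mul_distrib, Finset.prod_const, Nat.card_Icc]
  norm_num

lemma abstract_bound (N : ℕ) (ε rmax : ℝ) (hε0 : 0 < ε) (hε1 : ε ≤ 1) (hrmax : 0 ≤ rmax)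
    (rk lamk lamTk g gT d : ℕ → ℝ)
    (hrk : ∀ k ∈ Finset.Icc 1 N, 0 ≤ rk k ∧ rk k ≤ rmax)
    (hlk : ∀ k ∈ Finset.Icc 1 N, 0 ≤ lamk k)
    (hlT : ∀ k ∈ Finset.Icc 1 N, lamk k ≤ lamTk k ∧ lamTk k ≤ 1)
    (hg : ∀ i ∈ Finset.Icc 1 N, 0 ≤ g i)
    (hgT : ∀ i ∈ Finset.Icc 1 N, 0 ≤ gT i ∧ gT i ≤ 1 - ε)
    (hd : ∀ i ∈ Finset.Icc 1 N, gT i - g i ≤ d i ∧ 0 ≤ d i) :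
    (∑ k ∈ Finset.Icc 1 N, rk k * lamTk k * ∏ i ∈ Finset.Icc 1 (k - 1), gT i)
      - ∑ k ∈ Finset.Icc 1 N, rk k * lamk k * ∏ i ∈ Finset.Icc 1 (k - 1), g i
    ≤ rmax / ε * ∑ k ∈ Finset.Icc 1 N,
        (d k + 2 * (lamTk k - lamk k)) * ∏ i ∈ Finset.Icc 1 (k - 1), g i := by
  have hres : ∀ k ∈ Finset.Icc 1 N, ∀ i ∈ Finset.Icc 1 (k - 1), i ∈ Finset.Icc 1 N := by
    intro k hk i hi; simp only [Finset.mem_Icc] at *; omega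
  have hP : ∀ m ≤ N, 0 ≤ ∏ i ∈ Finset.Icc 1 m, g i := by
    intro m hm
    refine Finset.prod_nonneg fun i hi => hg i ?_
    simp only [Finset.mem_Icc] at *; omega
  have hSnn : ∀ k ∈ Finset.Icc 1 N,
      0 ≤ ∑ j ∈ Finset.Icc 1 (k - 1), (∏ i ∈ Finset.Icc 1 (j - 1), g i) * d j * (1 - ε) ^ (k - 1 - j) := by
    intro k hk
    refine Finset.sum_nonneg fun j hj => ?_
    have hjN : j ∈ Finset.Icc 1 N := hres k hk j hj
    have hj1 : j - 1 ≤ N := by simp only [Finset.mem_Icc] at hjN; omega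
    exact mul_nonneg (mul_nonneg (hP _ hj1) (hd j hjN).2) (pow_nonneg (by linarith) _)
  have perk : ∀ k ∈ Finset.Icc 1 N,
      rk k * lamTk k * (∏ i ∈ Finset.Icc 1 (k - 1), gT i)
        - rk k * lamk k * (∏ i ∈ Finset.Icc 1 (k - 1), g i)
      ≤ rmax * (∑ j ∈ Finset.Icc 1 (k - 1), (∏ i ∈ Finset.Icc 1 (j - 1), g i) * d j * (1 - ε) ^ (k - 1 - j))
        + rmax * ((lamTk k - lamk k) * ∏ i ∈ Finset.Icc 1 (k - 1), g i) := by
    intro k hk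
    have hkN : k - 1 ≤ N := by simp only [Finset.mem_Icc] at hk; omega
    have core := prod_diff_le ε g gT d (k - 1)
      (fun i hi => hg i (hres k hk i hi)) (fun i hi => (hgT i (hres k hk i hi)).1)
      (fun i hi => (hgT i (hres k hk i hi)).2) (fun i hi => (hd i (hres k hk i hi)).1)
      (fun i hi => (hd i (hres k hk i hi)).2)
    have hrl0 : 0 ≤ rk k * lamTk k :=
      mul_nonneg (hrk k hk).1 (le_trans (hlk k hk) (hlT k hk).1)
    have hrl1 : rk k * lamTk k ≤ rmax := by
      calc rk k * lamTk k ≤ rmax * 1 :=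
            mul_le_mul (hrk k hk).2 (hlT k hk).2 (le_trans (hlk k hk) (hlT k hk).1) hrmax
        _ = rmax := mul_one rmax
    have b1 := helper_mul _ _ _ _ core (hSnn k hk) hrl0 hrl1
    have b2 : rk k * ((lamTk k - lamk k) * ∏ i ∈ Finset.Icc 1 (k - 1), g i)
        ≤ rmax * ((lamTk k - lamk k) * ∏ i ∈ Finset.Icc 1 (k - 1), g i) :=
      mul_le_mul_of_nonneg_right (hrk k hk).2
        (mul_nonneg (by linarith [(hlT k hk).1]) (hP _ hkN))
    nlinarith [b1, b2]
  calc (∑ k ∈ Finset.Icc 1 N, rk k * lamTk k * ∏ i ∈ Finset.Icc 1 (k - 1), gT i)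
      - ∑ k ∈ Finset.Icc 1 N, rk k * lamk k * ∏ i ∈ Finset.Icc 1 (k - 1), g i
      = ∑ k ∈ Finset.Icc 1 N, (rk k * lamTk k * (∏ i ∈ Finset.Icc 1 (k - 1), gT i)
          - rk k * lamk k * ∏ i ∈ Finset.Icc 1 (k - 1), g i) := (Finset.sum_sub_distrib _ _).symm
    _ ≤ ∑ k ∈ Finset.Icc 1 N,
          (rmax * (∑ j ∈ Finset.Icc 1 (k - 1), (∏ i ∈ Finset.Icc 1 (j - 1), g i) * d j * (1 - ε) ^ (k - 1 - j))
            + rmax * ((lamTk k - lamk k) * ∏ i ∈ Finset.Icc 1 (k - 1), g i)) :=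
        Finset.sum_le_sum perk
    _ = rmax * (∑ k ∈ Finset.Icc 1 N, ∑ j ∈ Finset.Icc 1 (k - 1),
          (∏ i ∈ Finset.Icc 1 (j - 1), g i) * d j * (1 - ε) ^ (k - 1 - j))
        + rmax * ∑ k ∈ Finset.Icc 1 N, (lamTk k - lamk k) * ∏ i ∈ Finset.Icc 1 (k - 1), g i := by
        rw [Finset.sum_add_distrib, ← Finset.mul_sum, ← Finset.mul_sum]
    _ = rmax * (∑ j ∈ Finset.Icc 1 N, ∑ k ∈ Finset.Icc (j + 1) N,
          (∏ i ∈ Finset.Icc 1 (j - 1), g i) * d j * (1 - ε) ^ (k - 1 - j))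
        + rmax * ∑ k ∈ Finset.Icc 1 N, (lamTk k - lamk k) * ∏ i ∈ Finset.Icc 1 (k - 1), g i := by
        congr 1
        congr 1
        refine Finset.sum_comm' ?_
        intro k j
        simp only [Finset.mem_Icc]
        omega
    _ ≤ rmax * (∑ j ∈ Finset.Icc 1 N, (∏ i ∈ Finset.Icc 1 (j - 1), g i) * d j * (1 / ε))
        + rmax * ∑ k ∈ Finset.Icc 1 N, (lamTk k - lamk k) * ∏ i ∈ Finset.Icc 1 (k - 1), g i := by
        refine add_le_add (mul_le_mul_of_nonneg_left ?_ hrmax) le_rfl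
        refine Finset.sum_le_sum fun j hj => ?_
        have hjN : j - 1 ≤ N := by simp only [Finset.mem_Icc] at hj; omega
        have hPd : 0 ≤ (∏ i ∈ Finset.Icc 1 (j - 1), g i) * d j :=
          mul_nonneg (hP _ hjN) (hd j hj).2
        calc ∑ k ∈ Finset.Icc (j + 1) N,
              (∏ i ∈ Finset.Icc 1 (j - 1), g i) * d j * (1 - ε) ^ (k - 1 - j)
            = (∏ i ∈ Finset.Icc 1 (j - 1), g i) * d j
                * ∑ k ∈ Finset.Icc (j + 1) N, (1 - ε) ^ (k - 1 - j) := by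
              rw [Finset.mul_sum]
          _ ≤ (∏ i ∈ Finset.Icc 1 (j - 1), g i) * d j * (1 / ε) := by
              refine mul_le_mul_of_nonneg_left ?_ hPd
              calc ∑ k ∈ Finset.Icc (j + 1) N, (1 - ε) ^ (k - 1 - j)
                  = ∑ m ∈ (Finset.Icc (j + 1) N).image (fun k => k - 1 - j), (1 - ε) ^ m := by
                    rw [Finset.sum_image]
                    intro a ha b hb hab
                    simp only [Finset.coe_Icc, Set.mem_Icc, Finset.mem_Icc] at *
                    omega
                _ ≤ ∑ m ∈ Finset.range N, (1 - ε) ^ m := by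
                    refine Finset.sum_le_sum_of_subset_of_nonneg ?_ ?_
                    · intro m hm
                      simp only [Finset.mem_image, Finset.mem_Icc, Finset.mem_range] at *
                      omega
                    · intro i _ _
                      exact pow_nonneg (by linarith) i
                _ ≤ 1 / ε := my_geom_le ε hε0 hε1 N
    _ ≤ rmax / ε * ∑ k ∈ Finset.Icc 1 N,
          (d k + 2 * (lamTk k - lamk k)) * ∏ i ∈ Finset.Icc 1 (k - 1), g i := by
        rw [Finset.mul_sum, Finset.mul_sum, Finset.mul_sum, ← Finset.sum_add_distrib]
        refine Finset.sum_le_sum fun k hk => ?_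
        have hkN : k - 1 ≤ N := by simp only [Finset.mem_Icc] at hk; omega
        have hPk := hP _ hkN
        have hdk := (hd k hk).2
        have hΔ : 0 ≤ lamTk k - lamk k := by linarith [(hlT k hk).1]
        have h1 : rmax * ((∏ i ∈ Finset.Icc 1 (k - 1), g i) * d k * (1 / ε))
            = rmax / ε * (d k * ∏ i ∈ Finset.Icc 1 (k - 1), g i) := by
          rw [div_mul_eq_mul_div, mul_one_div, ← mul_div_assoc, mul_div_assoc]
          ring_nf
        have hre0 : rmax ≤ rmax / ε := by
          rw [le_div_iff₀ hε0]
          nlinarith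
        have hre : rmax ≤ 2 * (rmax / ε) := by
          have : 0 ≤ rmax / ε := div_nonneg hrmax hε0.le
          linarith
        have h2 : rmax * ((lamTk k - lamk k) * ∏ i ∈ Finset.Icc 1 (k - 1), g i)
            ≤ 2 * (rmax / ε) * ((lamTk k - lamk k) * ∏ i ∈ Finset.Icc 1 (k - 1), g i) :=
          mul_le_mul_of_nonneg_right hre (mul_nonneg hΔ hPk)
        nlinarith [h1, h2]

/-- revenue perturbation bound. -/
theorem stmt8 (N : ℕ) (hN : 1 ≤ N) (εQ : ℝ) (hεQ : εQ ∈ Set.Ioo (0 : ℝ) 1)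
    (σ : ℕ → ℕ) (hσ : Set.BijOn σ (Set.Icc 1 N) (Set.Icc 1 N))
    (rmax : ℝ) (hrmax : 0 ≤ rmax)
    (r : ℕ → ℝ) (hr : ∀ k ∈ Set.Icc 1 N, r k ∈ Set.Icc 0 rmax)
    (lam lamT : ℕ → ℝ)
    (hlam : ∀ k ∈ Set.Icc 1 N, lam k ∈ Set.Icc (0 : ℝ) 1)
    (hlamT : ∀ k ∈ Set.Icc 1 N, lamT k ∈ Set.Icc (0 : ℝ) 1)
    (hle : ∀ k ∈ Set.Icc 1 N, lam k ≤ lamT k)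
    (q qT s sT : ℝ)
    (hq : q ∈ Set.Icc (0 : ℝ) 1) (hqT : qT ∈ Set.Icc (0 : ℝ) 1)
    (hs : s ∈ Set.Icc (0 : ℝ) 1) (hsT : sT ∈ Set.Icc (0 : ℝ) 1)
    (hqle : q ≤ qT) (hqTε : qT ≤ 1 - εQ) (hqs : q * s ≤ qT * sT) :
    Revenue N σ r lamT qT sT - Revenue N σ r lam q s ≤
      rmax / εQ *
        ∑ k ∈ Finset.Icc 1 N,
          (|q - qT| * (1 - lam (σ k)) + 3 * |lam (σ k) - lamT (σ k)| +
              |q * s - qT * sT| * lam (σ k)) *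
            Afun σ lam q s k := by
  obtain ⟨hε0, hε1'⟩ := hεQ
  have hε1 : εQ ≤ 1 := le_of_lt hε1'
  obtain ⟨hq0, hq1⟩ := hq
  obtain ⟨hqT0, hqT1⟩ := hqT
  obtain ⟨hs0, hs1⟩ := hs
  obtain ⟨hsT0, hsT1⟩ := hsT
  have hmem : ∀ k ∈ Finset.Icc 1 N, σ k ∈ Set.Icc 1 N := by
    intro k hk
    refine hσ.mapsTo ?_
    simpa [Set.mem_Icc, Finset.mem_Icc] using Finset.mem_Icc.mp hk
  -- abbreviations (as plain facts)
  have key := abstract_bound N εQ rmax hε0 hε1 hrmax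
    (fun k => r (σ k)) (fun k => lam (σ k)) (fun k => lamT (σ k))
    (fun i => q * (1 - lam (σ i) + s * lam (σ i)))
    (fun i => qT * (1 - lamT (σ i) + sT * lamT (σ i)))
    (fun j => |q - qT| * (1 - lam (σ j)) + |lam (σ j) - lamT (σ j)| + |q * s - qT * sT| * lam (σ j))
    (fun k hk => (hr (σ k) (hmem k hk)))
    (fun k hk => (hlam (σ k) (hmem k hk)).1)
    (fun k hk => ⟨hle (σ k) (hmem k hk), (hlamT (σ k) (hmem k hk)).2⟩)
    ?_ ?_ ?_
  · -- main chain
    calc Revenue N σ r lamT qT sT - Revenue N σ r lam q s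
        = (∑ k ∈ Finset.Icc 1 N, r (σ k) * lamT (σ k) *
              ∏ i ∈ Finset.Icc 1 (k - 1), (qT * (1 - lamT (σ i) + sT * lamT (σ i))))
          - ∑ k ∈ Finset.Icc 1 N, r (σ k) * lam (σ k) *
              ∏ i ∈ Finset.Icc 1 (k - 1), (q * (1 - lam (σ i) + s * lam (σ i))) := by
          unfold Revenue
          congr 1 <;>
          · refine Finset.sum_congr rfl fun k hk => ?_
            have hk1 : 1 ≤ k := (Finset.mem_Icc.mp hk).1
            rw [mul_assoc]
            congr 1
            exact Afun_eq σ _ _ _ k hk1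
      _ ≤ rmax / εQ * ∑ k ∈ Finset.Icc 1 N,
            ((|q - qT| * (1 - lam (σ k)) + |lam (σ k) - lamT (σ k)| + |q * s - qT * sT| * lam (σ k))
              + 2 * (lamT (σ k) - lam (σ k))) *
              ∏ i ∈ Finset.Icc 1 (k - 1), (q * (1 - lam (σ i) + s * lam (σ i))) := key
      _ = rmax / εQ * ∑ k ∈ Finset.Icc 1 N,
            (|q - qT| * (1 - lam (σ k)) + 3 * |lam (σ k) - lamT (σ k)| +
                |q * s - qT * sT| * lam (σ k)) * Afun σ lam q s k := by
          congr 1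
          refine Finset.sum_congr rfl fun k hk => ?_
          have hk1 : 1 ≤ k := (Finset.mem_Icc.mp hk).1
          have habs : |lam (σ k) - lamT (σ k)| = lamT (σ k) - lam (σ k) := by
            rw [abs_sub_comm, abs_of_nonneg (by linarith [hle (σ k) (hmem k hk)])]
          rw [Afun_eq σ lam q s k hk1, habs]
          ring
  · -- 0 ≤ g
    intro i hi
    obtain ⟨ha0, ha1⟩ := hlam (σ i) (hmem i hi)
    exact mul_nonneg hq0 (by nlinarith [mul_nonneg hs0 ha0])
  · -- gT bounds
    intro i hi
    obtain ⟨hb0, hb1⟩ := hlamT (σ i) (hmem i hi)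
    constructor
    · exact mul_nonneg hqT0 (by nlinarith [mul_nonneg hsT0 hb0])
    · have hle1 : 1 - lamT (σ i) + sT * lamT (σ i) ≤ 1 := by
        nlinarith [mul_nonneg hb0 (show (0:ℝ) ≤ 1 - sT by linarith)]
      calc qT * (1 - lamT (σ i) + sT * lamT (σ i)) ≤ qT * 1 :=
            mul_le_mul_of_nonneg_left hle1 hqT0
        _ = qT := mul_one qT
        _ ≤ 1 - εQ := hqTε
  · -- d bounds
    intro i hi
    obtain ⟨ha0, ha1⟩ := hlam (σ i) (hmem i hi)
    obtain ⟨hb0, hb1⟩ := hlamT (σ i) (hmem i hi)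
    have hab : lam (σ i) ≤ lamT (σ i) := hle (σ i) (hmem i hi)
    have e1 : |q - qT| = qT - q := by
      rw [abs_sub_comm, abs_of_nonneg (by linarith)]
    have e2 : |lam (σ i) - lamT (σ i)| = lamT (σ i) - lam (σ i) := by
      rw [abs_sub_comm, abs_of_nonneg (by linarith)]
    have e3 : |q * s - qT * sT| = qT * sT - q * s := by
      rw [abs_sub_comm, abs_of_nonneg (by linarith)]
    constructor
    · simp only [e1, e2, e3]
      have hq1s : qT * sT ≤ 1 := by nlinarith
      nlinarith [mul_nonneg (sub_nonneg.2 hab) (show (0:ℝ) ≤ 1 - qT * sT + qT by nlinarith)]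
    · refine add_nonneg (add_nonneg (mul_nonneg (abs_nonneg _) (by linarith)) (abs_nonneg _))
        (mul_nonneg (abs_nonneg _) ha0)
end

section
/- Let N ≥ 1, let σ be a permutation of {1,…,N}, let λ : {1,…,N} → [0,1], let v ∈ {1,…,N}, and let b ≥ 1 be an integer. Then Σ_{Q ⊆ {1,…,v}} P^buy(Q; v, b, λ, σ) = 1. -/
open Finset

private noncomputable def G (μ : ℕ → ℝ) (v b : ℕ) : ℝ :=
  ∑ Q ∈ (Finset.Icc 1 v).powerset,
    if Q.card < b then (∏ k ∈ Q, μ k) * ∏ k ∈ Finset.Icc 1 v \ Q, (1 - μ k) else 0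

private noncomputable def H (μ : ℕ → ℝ) (v c : ℕ) : ℝ :=
  ∑ Q ∈ (Finset.Icc 1 v).powerset,
    if Q.card = c then (∏ k ∈ Q, μ k) * ∏ k ∈ Finset.Icc 1 v \ Q, (1 - μ k) else 0

private lemma Icc_succ (v : ℕ) : Finset.Icc 1 (v+1) = insert (v+1) (Finset.Icc 1 v) := by
  ext k; simp [Finset.mem_Icc]; omega

private lemma G_add_H (μ : ℕ → ℝ) (v c : ℕ) : G μ v (c+1) = G μ v c + H μ v c := by
  unfold G H
  rw [← Finset.sum_add_distrib]
  refine Finset.sum_congr rfl fun Q _ => ?_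
  rcases lt_trichotomy Q.card c with h | h | h
  · simp [h, Nat.lt_succ_of_lt h, Nat.ne_of_lt h]
  · simp [h]
  · have : ¬ Q.card < c + 1 := by omega
    simp [this, Nat.lt_asymm h, Nat.ne_of_gt h]

private lemma G_rec (μ : ℕ → ℝ) (v c : ℕ) :
    G μ (v+1) (c+1) = (1 - μ (v+1)) * G μ v (c+1) + μ (v+1) * G μ v c := by
  unfold G
  rw [Icc_succ, Finset.sum_powerset_insert (by simp)]
  congr 1
  · rw [Finset.mul_sum]
    refine Finset.sum_congr rfl fun Q hQ => ?_
    have hQs : Q ⊆ Finset.Icc 1 v := Finset.mem_powerset.mp hQ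
    have hv1 : (v+1) ∉ Q := fun h => by simpa using hQs h
    have hsd : insert (v+1) (Finset.Icc 1 v) \ Q = insert (v+1) (Finset.Icc 1 v \ Q) := by
      rw [Finset.insert_sdiff_of_notMem _ hv1]
    by_cases h : Q.card < c + 1
    · rw [if_pos h, if_pos h, hsd, Finset.prod_insert (by simp)]
      ring
    · simp [h]
  · rw [Finset.mul_sum]
    refine Finset.sum_congr rfl fun Q hQ => ?_
    have hQs : Q ⊆ Finset.Icc 1 v := Finset.mem_powerset.mp hQ
    have hv1 : (v+1) ∉ Q := fun h => by simpa using hQs h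
    have hcard : (insert (v+1) Q).card = Q.card + 1 := Finset.card_insert_of_notMem hv1
    have hsd : insert (v+1) (Finset.Icc 1 v) \ insert (v+1) Q = Finset.Icc 1 v \ Q := by
      ext k
      simp only [Finset.mem_sdiff, Finset.mem_insert, Finset.mem_Icc]
      constructor
      · rintro ⟨h1 | h1, h2⟩
        · omega
        · exact ⟨h1, fun hk => h2 (Or.inr hk)⟩
      · rintro ⟨h1, h2⟩
        refine ⟨Or.inr h1, ?_⟩
        rintro (rfl | hk)
        · omega
        · exact h2 hk
    by_cases h : Q.card < c
    · rw [if_pos (show (insert (v+1) Q).card < c + 1 by omega),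
        if_pos h, hsd, Finset.prod_insert hv1]
      ring
    · rw [if_neg (show ¬ (insert (v+1) Q).card < c + 1 by omega), if_neg h, mul_zero]

private lemma key (μ : ℕ → ℝ) (c : ℕ) : ∀ v : ℕ,
    G μ v (c+1) + ∑ m ∈ Finset.Icc 1 v, μ m * H μ (m-1) c = 1 := by
  intro v
  induction v with
  | zero => simp [G]
  | succ v ih =>
    rw [Icc_succ, Finset.sum_insert (by simp), G_rec]
    have hH : H μ ((v+1)-1) c = H μ v c := by norm_num
    have hGH := G_add_H μ v c
    calc (1 - μ (v+1)) * G μ v (c+1) + μ (v+1) * G μ v c +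
          (μ (v+1) * H μ ((v+1)-1) c + ∑ m ∈ Finset.Icc 1 v, μ m * H μ (m-1) c)
        = G μ v (c+1) + ∑ m ∈ Finset.Icc 1 v, μ m * H μ (m-1) c := by
          rw [hH, hGH]; ring
      _ = 1 := ih

/-- `P^buy(·; v, b, λ, σ)` is a probability distribution over subsets of
`{1,…,v}`. -/
theorem stmt13 (N : ℕ) (hN : 1 ≤ N) (σ : ℕ → ℕ)
    (hσ : Set.BijOn σ (Set.Icc 1 N) (Set.Icc 1 N))
    (lam : ℕ → ℝ) (hlam : ∀ k ∈ Set.Icc 1 N, lam k ∈ Set.Icc (0 : ℝ) 1)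
    (v : ℕ) (hv1 : 1 ≤ v) (hvN : v ≤ N) (b : ℕ) (hb : 1 ≤ b) :
    ∑ Q ∈ (Finset.Icc 1 v).powerset, Pbuy σ lam v b Q = 1 := by
  set μ : ℕ → ℝ := fun k => lam (σ k) with hμ
  obtain ⟨c, rfl⟩ : ∃ c, b = c + 1 := ⟨b - 1, by omega⟩
  have split : ∀ Q : Finset ℕ, Pbuy σ lam v (c+1) Q =
      (if Q.card < c+1 then (∏ k ∈ Q, μ k) * ∏ k ∈ Finset.Icc 1 v \ Q, (1 - μ k) else 0)
      + (if Q.card = c+1 then (∏ k ∈ Q, μ k) *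
          ∏ k ∈ (Finset.Icc 1 v \ Q).filter (fun k => k ≤ Q.sup id), (1 - μ k) else 0) := by
    intro Q
    unfold Pbuy
    rcases lt_trichotomy Q.card (c+1) with h | h | h
    · simp [h, Nat.ne_of_lt h, hμ]
    · simp [h, hμ]
    · simp [Nat.lt_asymm h, Nat.ne_of_gt h]
  rw [Finset.sum_congr rfl fun Q _ => split Q, Finset.sum_add_distrib]
  have hG : ∑ Q ∈ (Finset.Icc 1 v).powerset,
      (if Q.card < c+1 then (∏ k ∈ Q, μ k) * ∏ k ∈ Finset.Icc 1 v \ Q, (1 - μ k) else 0)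
      = G μ v (c+1) := rfl
  -- reindex the card = c+1 part
  have hH : ∑ Q ∈ (Finset.Icc 1 v).powerset,
      (if Q.card = c+1 then (∏ k ∈ Q, μ k) *
          ∏ k ∈ (Finset.Icc 1 v \ Q).filter (fun k => k ≤ Q.sup id), (1 - μ k) else 0)
      = ∑ m ∈ Finset.Icc 1 v, μ m * H μ (m-1) c := by
    rw [← Finset.sum_filter]
    have hrhs : ∀ m ∈ Finset.Icc 1 v, μ m * H μ (m-1) c =
        ∑ R ∈ ((Finset.Icc 1 (m-1)).powerset.filter fun R => R.card = c),
          μ m * ((∏ k ∈ R, μ k) * ∏ k ∈ Finset.Icc 1 (m-1) \ R, (1 - μ k)) := by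
      intro m _
      rw [H, Finset.mul_sum, Finset.sum_filter]
      exact Finset.sum_congr rfl fun i _ => by split <;> simp
    rw [Finset.sum_congr rfl hrhs, Finset.sum_sigma']
    refine Finset.sum_nbij' (fun Q => ⟨Q.sup id, Q.erase (Q.sup id)⟩)
      (fun p => insert p.1 p.2) ?_ ?_ ?_ ?_ ?_
    · intro Q hQ
      simp only [Finset.mem_filter, Finset.mem_powerset] at hQ
      obtain ⟨hQs, hQc⟩ := hQ
      have hne : Q.Nonempty := Finset.card_pos.mp (by omega)
      obtain ⟨i, hi, hsup⟩ := Finset.exists_mem_eq_sup Q hne id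
      have hmem : Q.sup id ∈ Q := by rw [hsup]; exact hi
      have hmIcc : Q.sup id ∈ Finset.Icc 1 v := hQs hmem
      simp only [Finset.mem_sigma, Finset.mem_filter, Finset.mem_powerset]
      refine ⟨hmIcc, ?_, by rw [Finset.card_erase_of_mem hmem, hQc]; rfl⟩
      intro k hk
      simp only [Finset.mem_erase] at hk
      have hk1 : 1 ≤ k := (Finset.mem_Icc.mp (hQs hk.2)).1
      have hkle : k ≤ Q.sup id := Finset.le_sup (f := id) hk.2
      simp only [Finset.mem_Icc]
      omega
    · intro p hp
      simp only [Finset.mem_sigma, Finset.mem_filter, Finset.mem_powerset] at hp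
      obtain ⟨hm, hRs, hRc⟩ := hp
      have hm1 := Finset.mem_Icc.mp hm
      have hnm : p.1 ∉ p.2 := by
        intro h
        have := (Finset.mem_Icc.mp (hRs h)).2
        omega
      simp only [Finset.mem_filter, Finset.mem_powerset]
      constructor
      · intro k hk
        rcases Finset.mem_insert.mp hk with rfl | hk
        · exact hm
        · have := Finset.mem_Icc.mp (hRs hk)
          simp only [Finset.mem_Icc]; omega
      · rw [Finset.card_insert_of_notMem hnm, hRc]
    · intro Q hQ
      simp only [Finset.mem_filter, Finset.mem_powerset] at hQ
      have hne : Q.Nonempty := Finset.card_pos.mp (by omega)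
      obtain ⟨i, hi, hsup⟩ := Finset.exists_mem_eq_sup Q hne id
      have hmem : Q.sup id ∈ Q := by rw [hsup]; exact hi
      exact Finset.insert_erase hmem
    · intro p hp
      simp only [Finset.mem_sigma, Finset.mem_filter, Finset.mem_powerset] at hp
      obtain ⟨hm, hRs, hRc⟩ := hp
      have hm1 := Finset.mem_Icc.mp hm
      have hnm : p.1 ∉ p.2 := by
        intro h
        have := (Finset.mem_Icc.mp (hRs h)).2
        omega
      have hsup : (insert p.1 p.2).sup id = p.1 := by
        rw [Finset.sup_insert]
        have : p.2.sup id ≤ p.1 := by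
          refine Finset.sup_le fun k hk => ?_
          have := (Finset.mem_Icc.mp (hRs hk)).2
          simp only [id]; omega
        simpa [id] using sup_eq_left.mpr this
      have : (insert p.1 p.2).erase p.1 = p.2 := Finset.erase_insert hnm
      rcases p with ⟨m, R⟩
      simp only [hsup, this]
    · intro Q hQ
      simp only [Finset.mem_filter, Finset.mem_powerset] at hQ
      obtain ⟨hQs, hQc⟩ := hQ
      have hne : Q.Nonempty := Finset.card_pos.mp (by omega)
      obtain ⟨i, hi, hsup⟩ := Finset.exists_mem_eq_sup Q hne id
      have hmem : Q.sup id ∈ Q := by rw [hsup]; exact hi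
      have hmv := Finset.mem_Icc.mp (hQs hmem)
      have hfe : (Finset.Icc 1 v \ Q).filter (fun k => k ≤ Q.sup id)
          = Finset.Icc 1 (Q.sup id - 1) \ Q.erase (Q.sup id) := by
        ext k
        simp only [Finset.mem_filter, Finset.mem_sdiff, Finset.mem_Icc, Finset.mem_erase]
        constructor
        · rintro ⟨⟨⟨h1, h2⟩, h3⟩, h4⟩
          have : k ≠ Q.sup id := fun h => h3 (h ▸ hmem)
          exact ⟨⟨h1, by omega⟩, fun h => h3 h.2⟩
        · rintro ⟨⟨h1, h2⟩, h3⟩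
          have hkQ : k ∉ Q := by
            intro h
            exact h3 ⟨by omega, h⟩
          exact ⟨⟨⟨h1, by omega⟩, hkQ⟩, by omega⟩
      rw [hfe, ← Finset.mul_prod_erase Q μ hmem]
      ring
  rw [hG, hH]
  exact key μ c v
end

section
/- Let m, N, T ≥ 1 be integers and α > 0. Let Φ : {1,…,T} → {0,…,N}, and let y_{t,k} ∈ ℝ^m with ‖y_{t,k}‖ ≤ 1 for each t ∈ {1,…,T} and k ∈ {1,…,Φ_t}. Define Σ_0 := α I_m and Σ_t := Σ_{t−1} + Σ_{k=1}^{Φ_t} y_{t,k} y_{t,k}ᵀ, and g_{t,k}² := y_{t,k}ᵀ (Σ_{t−1})^{−1} y_{t,k}. Then Σ_{t=1}^{T} Σ_{k=1}^{Φ_t} log(1 + g_{t,k}²) ≤ N m log(1 + TN/(m α)). -/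
open Finset Matrix

/-- `Sig m α Φ y t = Σ_t`: the regularized Gram matrix after `t` rounds, defined by
`Σ_0 = α I_m` and `Σ_t = Σ_{t-1} + Σ_{k=1}^{Φ_t} y_{t,k} y_{t,k}ᵀ`. -/
noncomputable def Sig (m : ℕ) (α : ℝ) (Φ : ℕ → ℕ) (y : ℕ → ℕ → Fin m → ℝ) :
    ℕ → Matrix (Fin m) (Fin m) ℝ
  | 0 => α • (1 : Matrix (Fin m) (Fin m) ℝ)
  | t + 1 => Sig m α Φ y t +
      ∑ k ∈ Finset.Icc 1 (Φ (t + 1)), Matrix.vecMulVec (y (t + 1) k) (y (t + 1) k)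

section Aux

variable {n : Type*} [Fintype n] [DecidableEq n]



lemma psd_vecMulVec (v : n → ℝ) : (vecMulVec v v).PosSemidef := by
  refine posSemidef_iff_dotProduct_mulVec.mpr ⟨?_, ?_⟩
  · ext i j
    simp [vecMulVec_apply, conjTranspose_apply, mul_comm]
  · intro x
    have h : (vecMulVec v v) *ᵥ x = (v ⬝ᵥ x) • v := by
      ext i
      simp only [vecMulVec_apply, mulVec, dotProduct, Pi.smul_apply, smul_eq_mul]
      rw [Finset.sum_mul]
      exact Finset.sum_congr rfl fun j _ => by ring
    rw [h]
    simp only [star_trivial, dotProduct_smul, smul_eq_mul]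
    rw [dotProduct_comm]
    exact mul_self_nonneg _

lemma det_one_add_psd {M : Matrix n n ℝ} (hM : M.PosSemidef) : 1 ≤ (1 + M).det := by
  have hH := hM.1
  set U := (hH.eigenvectorUnitary : Matrix n n ℝ) with hUdef
  set d : Matrix n n ℝ := 1 + diagonal (RCLike.ofReal ∘ hH.eigenvalues) with hddef
  have hU : U * star U = 1 := (Matrix.mem_unitaryGroup_iff).mp hH.eigenvectorUnitary.2
  have h1 : U.det * (star U).det = 1 := by rw [← det_mul, hU, det_one]
  have key : 1 + M = U * d * star U := by
    rw [hddef, Matrix.mul_add, Matrix.add_mul, Matrix.mul_one, hU]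
    congr 1; exact hH.spectral_theorem
  have hdet : (1 + M).det = d.det :=
    calc (1 + M).det = U.det * d.det * (star U).det := by rw [key, det_mul, det_mul]
    _ = (U.det * (star U).det) * d.det := by ring
    _ = d.det := by rw [h1, one_mul]
  rw [hdet, hddef, ← diagonal_one, diagonal_add, det_diagonal]
  calc (1:ℝ) = ∏ _i : n, 1 := by simp
    _ ≤ _ := by
        apply Finset.prod_le_prod (fun i _ => by norm_num) (fun i _ => ?_)
        have := hM.eigenvalues_nonneg i
        simp only [Pi.add_apply, Function.comp_apply, RCLike.ofReal_real_eq_id, id_eq,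
          Pi.one_apply]
        linarith

open scoped MatrixOrder in
lemma det_le_det_add {A P : Matrix n n ℝ} (hA : A.PosDef) (hP : P.PosSemidef) :
    A.det ≤ (A + P).det := by
  have hS := hA.posSemidef
  set R := CFC.sqrt A with hRdef
  have hRps : R.PosSemidef := Matrix.nonneg_iff_posSemidef.mp (CFC.sqrt_nonneg A)
  have hRR : R * R = A := CFC.sqrt_mul_sqrt_self A hS.nonneg
  have hdetA : 0 < A.det := hA.det_pos
  have hdetR : R.det * R.det = A.det := by rw [← det_mul, hRR]
  have hRu : IsUnit R.det := by
    rw [isUnit_iff_ne_zero]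
    intro h
    rw [h, zero_mul] at hdetR
    exact hdetA.ne hdetR
  have hMps : (R⁻¹ * P * R⁻¹).PosSemidef := by
    have h := hP.mul_mul_conjTranspose_same R⁻¹
    rwa [hRps.1.inv] at h
  have key : A + P = R * (1 + R⁻¹ * P * R⁻¹) * R := by
    rw [Matrix.mul_add, Matrix.mul_one, Matrix.add_mul, hRR]
    congr 1
    rw [← Matrix.mul_assoc, ← Matrix.mul_assoc, Matrix.mul_nonsing_inv R hRu,
      Matrix.one_mul, Matrix.mul_assoc, Matrix.nonsing_inv_mul R hRu, Matrix.mul_one]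
  calc A.det = A.det * 1 := (mul_one _).symm
  _ ≤ A.det * (1 + R⁻¹ * P * R⁻¹).det :=
      mul_le_mul_of_nonneg_left (det_one_add_psd hMps) hdetA.le
  _ = R.det * (1 + R⁻¹ * P * R⁻¹).det * R.det := by rw [← hdetR]; ring
  _ = (A + P).det := by rw [key, det_mul, det_mul]

lemma det_add_vecMulVec {A : Matrix n n ℝ} (hA : A.PosDef) (v : n → ℝ) :
    (A + vecMulVec v v).det = A.det * (1 + v ⬝ᵥ A⁻¹ *ᵥ v) := by
  have hAu : IsUnit A.det := isUnit_iff_ne_zero.2 hA.det_pos.ne'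
  rw [vecMulVec_eq Unit, det_add_replicateCol_mul_replicateRow hAu]
  congr 1
  rw [Matrix.mul_assoc, ← replicateCol_mulVec, det_unique]
  simp [Matrix.add_apply, Matrix.one_apply_eq, replicateRow_mul_replicateCol_apply]

lemma trace_eq_sum_eigs {A : Matrix n n ℝ} (hH : A.IsHermitian) :
    A.trace = ∑ i, hH.eigenvalues i := by
  set U := (hH.eigenvectorUnitary : Matrix n n ℝ) with hUdef
  have hU : star U * U = 1 := (Matrix.mem_unitaryGroup_iff').mp hH.eigenvectorUnitary.2
  calc A.trace = (U * diagonal (RCLike.ofReal ∘ hH.eigenvalues) * star U).trace := by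
        congr 1; exact hH.spectral_theorem
  _ = (star U * (U * diagonal (RCLike.ofReal ∘ hH.eigenvalues))).trace := by
        rw [trace_mul_comm]
  _ = (diagonal (RCLike.ofReal ∘ hH.eigenvalues)).trace := by
        rw [← Matrix.mul_assoc, hU, Matrix.one_mul]
  _ = ∑ i, hH.eigenvalues i := by
        rw [trace_diagonal]
        simp [RCLike.ofReal_real_eq_id]

lemma det_eq_prod_eigs {A : Matrix n n ℝ} (hH : A.IsHermitian) :
    A.det = ∏ i, hH.eigenvalues i := by
  have := hH.det_eq_prod_eigenvalues
  simpa [RCLike.ofReal_real_eq_id] using this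

lemma det_le_trace_div_pow {A : Matrix n n ℝ} (hA : A.PosSemidef)
    (hc : 0 < Fintype.card n) :
    A.det ≤ (A.trace / Fintype.card n) ^ (Fintype.card n) := by
  set c := Fintype.card n with hcdef
  have hcne : (c : ℝ) ≠ 0 := Nat.cast_ne_zero.2 hc.ne'
  set ev := hA.1.eigenvalues with hev
  have hnn : ∀ i, 0 ≤ ev i := hA.eigenvalues_nonneg
  have amgm := Real.geom_mean_le_arith_mean_weighted Finset.univ
      (fun _ => (c : ℝ)⁻¹) ev (fun i _ => by positivity)
      (by simp [Finset.card_univ, hcne, ← hcdef]) (fun i _ => hnn i)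
  have hsum : ∑ i, (c:ℝ)⁻¹ * ev i = A.trace / c := by
    rw [← Finset.mul_sum, ← trace_eq_sum_eigs hA.1, div_eq_inv_mul]
  have hprod : (∏ i, ev i ^ ((c:ℝ)⁻¹)) ^ c = A.det := by
    rw [← Finset.prod_pow, det_eq_prod_eigs hA.1]
    refine Finset.prod_congr rfl fun i _ => ?_
    rw [← Real.rpow_natCast (ev i ^ ((c:ℝ)⁻¹)) c, ← Real.rpow_mul (hnn i),
      inv_mul_cancel₀ hcne, Real.rpow_one]
  calc A.det = (∏ i, ev i ^ ((c:ℝ)⁻¹)) ^ c := hprod.symm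
  _ ≤ (A.trace / c) ^ c := by
      apply pow_le_pow_left₀ (Finset.prod_nonneg fun i _ => Real.rpow_nonneg (hnn i) _)
      rw [← hsum]; exact amgm

end Aux

/-- the log-determinant (elliptical potential) bound
`Σ_{t=1}^T Σ_{k=1}^{Φ_t} log(1 + g_{t,k}²) ≤ N m log(1 + TN/(mα))`, where
`g_{t,k}² = y_{t,k}ᵀ (Σ_{t-1})⁻¹ y_{t,k}`. -/
theorem stmt14 (m N T : ℕ) (hm : 1 ≤ m) (hN : 1 ≤ N) (hT : 1 ≤ T)
    (α : ℝ) (hα : 0 < α)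
    (Φ : ℕ → ℕ) (hΦ : ∀ t ∈ Finset.Icc 1 T, Φ t ≤ N)
    (y : ℕ → ℕ → Fin m → ℝ)
    (hy : ∀ t ∈ Finset.Icc 1 T, ∀ k ∈ Finset.Icc 1 (Φ t),
      Real.sqrt (y t k ⬝ᵥ y t k) ≤ 1) :
    ∑ t ∈ Finset.Icc 1 T, ∑ k ∈ Finset.Icc 1 (Φ t),
        Real.log (1 + y t k ⬝ᵥ (Sig m α Φ y (t - 1))⁻¹ *ᵥ y t k) ≤
      (N : ℝ) * m * Real.log (1 + T * N / (m * α)) := by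
  set S := Sig m α Φ y with hSdef
  have hmne : (m : ℝ) ≠ 0 := Nat.cast_ne_zero.2 (by omega)
  have hS0 : S 0 = α • (1 : Matrix (Fin m) (Fin m) ℝ) := rfl
  have hSsucc : ∀ t, S (t+1) = S t +
      ∑ k ∈ Finset.Icc 1 (Φ (t + 1)), vecMulVec (y (t + 1) k) (y (t + 1) k) := fun t => rfl
  have hpsdSum : ∀ t, (∑ k ∈ Finset.Icc 1 (Φ t),
      vecMulVec (y t k) (y t k)).PosSemidef := by
    intro t
    exact Finset.sum_induction _ (fun M : Matrix (Fin m) (Fin m) ℝ => M.PosSemidef)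
      (fun _ _ ha hb => ha.add hb) Matrix.PosSemidef.zero (fun _ _ => psd_vecMulVec _)
  have hpos : ∀ t, (S t).PosDef := by
    intro t
    induction t with
    | zero =>
      rw [hS0, smul_one_eq_diagonal]
      exact posDef_diagonal_iff.2 fun _ => hα
    | succ t ih =>
      rw [hSsucc]
      exact ih.add_posSemidef (hpsdSum (t+1))
  have hdet_pos : ∀ t, 0 < (S t).det := fun t => (hpos t).det_pos
  set L : ℕ → ℝ := fun t => Real.log (S t).det with hLdef
  have hmono : ∀ t, (S t).det ≤ (S (t+1)).det := by
    intro t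
    rw [hSsucc]
    exact det_le_det_add (hpos t) (hpsdSum (t+1))
  have hstep : ∀ t, ∀ k ∈ Finset.Icc 1 (Φ (t+1)),
      Real.log (1 + y (t+1) k ⬝ᵥ (S t)⁻¹ *ᵥ y (t+1) k) ≤ L (t+1) - L t := by
    intro t k hk
    set g := y (t+1) k ⬝ᵥ (S t)⁻¹ *ᵥ y (t+1) k with hg
    have hg0 : 0 ≤ g := by
      have h := ((hpos t).inv).posSemidef.dotProduct_mulVec_nonneg (y (t+1) k)
      simpa [star_trivial] using h
    have hrest : (∑ j ∈ (Finset.Icc 1 (Φ (t+1))).erase k,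
        vecMulVec (y (t+1) j) (y (t+1) j)).PosSemidef := by
      exact Finset.sum_induction _ (fun M : Matrix (Fin m) (Fin m) ℝ => M.PosSemidef)
        (fun _ _ ha hb => ha.add hb) Matrix.PosSemidef.zero (fun _ _ => psd_vecMulVec _)
    have hsplit : S (t+1) = (S t + vecMulVec (y (t+1) k) (y (t+1) k)) +
        ∑ j ∈ (Finset.Icc 1 (Φ (t+1))).erase k, vecMulVec (y (t+1) j) (y (t+1) j) := by
      rw [hSsucc, ← Finset.add_sum_erase _ _ hk, ← add_assoc]
    have h1 : (S t).det * (1 + g) ≤ (S (t+1)).det := by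
      rw [hsplit, ← det_add_vecMulVec (hpos t)]
      exact det_le_det_add ((hpos t).add_posSemidef (psd_vecMulVec _)) hrest
    have h2 : (0:ℝ) < 1 + g := by linarith
    have h3 := Real.log_le_log (mul_pos (hdet_pos t) h2) h1
    rw [Real.log_mul (hdet_pos t).ne' h2.ne'] at h3
    simp only [hLdef]
    linarith
  have hround : ∀ t, Φ (t+1) ≤ N →
      ∑ k ∈ Finset.Icc 1 (Φ (t+1)), Real.log (1 + y (t+1) k ⬝ᵥ (S t)⁻¹ *ᵥ y (t+1) k)
        ≤ (N:ℝ) * (L (t+1) - L t) := by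
    intro t hΦt
    have hdiff : 0 ≤ L (t+1) - L t := by
      have := Real.log_le_log (hdet_pos t) (hmono t)
      simp only [hLdef]
      linarith
    calc ∑ k ∈ Finset.Icc 1 (Φ (t+1)), Real.log (1 + y (t+1) k ⬝ᵥ (S t)⁻¹ *ᵥ y (t+1) k)
        ≤ (Finset.Icc 1 (Φ (t+1))).card • (L (t+1) - L t) :=
          Finset.sum_le_card_nsmul _ _ _ (fun k hk => hstep t k hk)
    _ = (Φ (t+1) : ℝ) * (L (t+1) - L t) := by
          rw [nsmul_eq_mul, Nat.card_Icc]
          norm_num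
    _ ≤ (N:ℝ) * (L (t+1) - L t) :=
          mul_le_mul_of_nonneg_right (by exact_mod_cast hΦt) hdiff
  have htele : ∑ t ∈ Finset.Icc 1 T, (L t - L (t-1)) = L T - L 0 := by
    rw [← Finset.Ico_add_one_right_eq_Icc, Finset.sum_Ico_eq_sum_range]
    have : ∀ i, L (1 + i) - L (1 + i - 1) = L (i + 1) - L i := by
      intro i
      congr 1 <;> congr 1 <;> omega
    rw [Finset.sum_congr rfl fun i _ => this i]
    exact Finset.sum_range_sub L T
  have hmain : ∑ t ∈ Finset.Icc 1 T, ∑ k ∈ Finset.Icc 1 (Φ t),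
      Real.log (1 + y t k ⬝ᵥ (S (t-1))⁻¹ *ᵥ y t k) ≤ (N:ℝ) * (L T - L 0) := by
    calc ∑ t ∈ Finset.Icc 1 T, ∑ k ∈ Finset.Icc 1 (Φ t),
        Real.log (1 + y t k ⬝ᵥ (S (t-1))⁻¹ *ᵥ y t k)
        ≤ ∑ t ∈ Finset.Icc 1 T, (N:ℝ) * (L t - L (t-1)) := by
          apply Finset.sum_le_sum
          intro t ht
          have ht1 := (Finset.mem_Icc.1 ht).1
          obtain ⟨i, rfl⟩ : ∃ i, t = i + 1 := ⟨t - 1, by omega⟩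
          simpa using hround i (hΦ _ ht)
    _ = (N:ℝ) * (L T - L 0) := by rw [← Finset.mul_sum, htele]
  -- trace bound
  have htrace : ∀ t, t ≤ T → (S t).trace ≤ m * α + t * N := by
    intro t
    induction t with
    | zero => intro _; rw [hS0, trace_smul, trace_one]; simp [mul_comm]
    | succ t ih =>
      intro hle
      have ih' := ih (by omega)
      have hyb : ∀ k ∈ Finset.Icc 1 (Φ (t+1)), y (t+1) k ⬝ᵥ y (t+1) k ≤ 1 := by
        intro k hk
        have hd0 : 0 ≤ y (t+1) k ⬝ᵥ y (t+1) k :=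
          Finset.sum_nonneg fun i _ => mul_self_nonneg _
        have hs := hy (t+1) (Finset.mem_Icc.2 ⟨by omega, hle⟩) k hk
        nlinarith [Real.sq_sqrt hd0, Real.sqrt_nonneg (y (t+1) k ⬝ᵥ y (t+1) k)]
      have htr_vv : ∀ v : Fin m → ℝ, (vecMulVec v v).trace = v ⬝ᵥ v := by
        intro v
        simp [Matrix.trace, Matrix.diag, vecMulVec_apply, dotProduct]
      have hsum1 : (∑ k ∈ Finset.Icc 1 (Φ (t+1)),
          vecMulVec (y (t+1) k) (y (t+1) k)).trace ≤ N := by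
        rw [trace_sum]
        calc ∑ k ∈ Finset.Icc 1 (Φ (t+1)), (vecMulVec (y (t+1) k) (y (t+1) k)).trace
            ≤ ∑ k ∈ Finset.Icc 1 (Φ (t+1)), (1:ℝ) := by
              apply Finset.sum_le_sum
              intro k hk
              rw [htr_vv]
              exact hyb k hk
        _ = (Φ (t+1) : ℝ) := by rw [Finset.sum_const, Nat.card_Icc]; norm_num
        _ ≤ N := by exact_mod_cast hΦ (t+1) (Finset.mem_Icc.2 ⟨by omega, hle⟩)
      rw [hSsucc, trace_add]
      push_cast
      linarith
  -- final
  have hL0 : L 0 = m * Real.log α := by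
    simp only [hLdef, hS0, det_smul, det_one, mul_one, Fintype.card_fin]
    rw [Real.log_pow]
  have htrT : (S T).trace ≤ m * α + T * N := htrace T le_rfl
  have htr0 : 0 ≤ (S T).trace := by
    rw [trace_eq_sum_eigs (hpos T).1]
    exact Finset.sum_nonneg fun i _ => (hpos T).posSemidef.eigenvalues_nonneg i
  have hdetT : (S T).det ≤ (α + T * N / m) ^ m := by
    calc (S T).det ≤ ((S T).trace / Fintype.card (Fin m)) ^ (Fintype.card (Fin m)) :=
          det_le_trace_div_pow (hpos T).posSemidef (by simp; omega)
    _ = ((S T).trace / m) ^ m := by rw [Fintype.card_fin]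
    _ ≤ (α + T * N / m) ^ m := by
          apply pow_le_pow_left₀ (by positivity)
          rw [div_le_iff₀ (by positivity : (0:ℝ) < m)]
          calc (S T).trace ≤ m * α + T * N := htrT
          _ = (α + T * N / m) * m := by field_simp
  have hLT : L T ≤ m * Real.log (α + T * N / m) := by
    have hb : (0:ℝ) < α + T * N / m := by positivity
    calc L T ≤ Real.log ((α + T * N / m) ^ m) :=
          Real.log_le_log (hdet_pos T) hdetT
    _ = m * Real.log (α + T * N / m) := by rw [Real.log_pow]
  have hfin : L T - L 0 ≤ (m:ℝ) * Real.log (1 + T * N / (m * α)) := by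
    rw [hL0]
    have heq : Real.log (α + T * N / m) - Real.log α = Real.log (1 + T * N / (m * α)) := by
      rw [← Real.log_div (by positivity) hα.ne']
      congr 1
      field_simp
    calc L T - m * Real.log α ≤ m * Real.log (α + T * N / m) - m * Real.log α := by linarith
    _ = m * (Real.log (α + T * N / m) - Real.log α) := by ring
    _ = m * Real.log (1 + T * N / (m * α)) := by rw [heq]
  calc ∑ t ∈ Finset.Icc 1 T, ∑ k ∈ Finset.Icc 1 (Φ t),
      Real.log (1 + y t k ⬝ᵥ (S (t-1))⁻¹ *ᵥ y t k) ≤ (N:ℝ) * (L T - L 0) := hmain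
  _ ≤ (N:ℝ) * ((m:ℝ) * Real.log (1 + T * N / (m * α))) :=
        mul_le_mul_of_nonneg_left hfin (by positivity)
  _ = (N : ℝ) * m * Real.log (1 + T * N / (m * α)) := by ring
end

section
/- Let m, N, T ≥ 1 be integers and α > 0. Let Φ : {1,…,T} → {0,…,N}, and let y_{t,k} ∈ ℝ^m with ‖y_{t,k}‖ ≤ 1 for each t ∈ {1,…,T} and k ∈ {1,…,Φ_t}. Define Σ_0 := α I_m and Σ_t := Σ_{t−1} + Σ_{k=1}^{Φ_t} y_{t,k} y_{t,k}ᵀ, and g_{t,k} := (y_{t,k}ᵀ (Σ_{t−1})^{−1} y_{t,k})^{1/2}. Then Σ_{t=1}^{T} Σ_{k=1}^{Φ_t} g_{t,k} ≤ √( T N² m log(1 + TN/(m α)) / (α log(1 + α^{−1})) ). -/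
open Finset Matrix

namespace Stmt16Aux

variable {m : ℕ}

lemma psd_vmv (v : Fin m → ℝ) : (vecMulVec v v).PosSemidef := by
  refine Matrix.PosSemidef.of_dotProduct_mulVec_nonneg ?_ ?_
  · ext i j
    simp [Matrix.vecMulVec_apply, Matrix.conjTranspose_apply, mul_comm]
  · intro x
    have h1 : vecMulVec v v *ᵥ x = (v ⬝ᵥ x) • v := by
      ext i
      simp only [Matrix.mulVec, dotProduct, Matrix.vecMulVec_apply, Pi.smul_apply,
        smul_eq_mul, Finset.mul_sum]
      rw [Finset.sum_mul]
      exact Finset.sum_congr rfl fun j _ => by ring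
    rw [h1]
    simp only [star_trivial, dotProduct_smul, smul_eq_mul]
    rw [dotProduct_comm]
    exact mul_self_nonneg _

lemma trace_mul_vmv (C : Matrix (Fin m) (Fin m) ℝ) (v : Fin m → ℝ) :
    (C * vecMulVec v v).trace = v ⬝ᵥ C *ᵥ v := by
  simp only [Matrix.trace, Matrix.diag, Matrix.mul_apply, Matrix.vecMulVec_apply,
    dotProduct, Matrix.mulVec, Finset.mul_sum]
  exact Finset.sum_congr rfl fun j _ => Finset.sum_congr rfl fun i _ => by ring

lemma one_add_sum_le_prod {ι : Type*} (s : Finset ι) (f : ι → ℝ) (hf : ∀ i ∈ s, 0 ≤ f i) :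
    1 + ∑ i ∈ s, f i ≤ ∏ i ∈ s, (1 + f i) := by
  induction s using Finset.cons_induction with
  | empty => simp
  | cons a s ha ih =>
    rw [Finset.sum_cons, Finset.prod_cons]
    have hfa := hf a (Finset.mem_cons_self a s)
    have h1 : ∀ i ∈ s, 0 ≤ f i := fun i hi => hf i (Finset.mem_cons_of_mem hi)
    have h2 := ih h1
    have h3 : 0 ≤ ∑ i ∈ s, f i := Finset.sum_nonneg h1
    nlinarith

lemma psd_sum_vmv (s : Finset ℕ) (w : ℕ → Fin m → ℝ) :
    (∑ k ∈ s, vecMulVec (w k) (w k)).PosSemidef := by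
  induction s using Finset.cons_induction with
  | empty => simpa using Matrix.PosSemidef.zero
  | cons a s ha ih => rw [Finset.sum_cons]; exact (psd_vmv (w a)).add ih

lemma sig_herm (α : ℝ) (Φ : ℕ → ℕ) (y : ℕ → ℕ → Fin m → ℝ) (t : ℕ) :
    (Sig m α Φ y t).IsHermitian := by
  induction t with
  | zero =>
    show (α • (1 : Matrix (Fin m) (Fin m) ℝ)).IsHermitian
    rw [Matrix.smul_one_eq_diagonal]
    exact Matrix.isHermitian_diagonal _
  | succ t ih => exact ih.add (psd_sum_vmv _ _).isHermitian

lemma sig_quad (α : ℝ) (Φ : ℕ → ℕ) (y : ℕ → ℕ → Fin m → ℝ) (t : ℕ) (x : Fin m → ℝ) :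
    α * (x ⬝ᵥ x) ≤ x ⬝ᵥ Sig m α Φ y t *ᵥ x := by
  induction t with
  | zero =>
    show α * (x ⬝ᵥ x) ≤ x ⬝ᵥ (α • (1 : Matrix (Fin m) (Fin m) ℝ)) *ᵥ x
    rw [Matrix.smul_mulVec, Matrix.one_mulVec, dotProduct_smul]
    simp [smul_eq_mul]
  | succ t ih =>
    show α * (x ⬝ᵥ x) ≤ x ⬝ᵥ (Sig m α Φ y t + _) *ᵥ x
    rw [Matrix.add_mulVec, dotProduct_add]
    have h := (psd_sum_vmv (Finset.Icc 1 (Φ (t+1))) (y (t+1))).dotProduct_mulVec_nonneg x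
    simp only [star_trivial] at h
    linarith

lemma sig_posdef {α : ℝ} (hα : 0 < α) (Φ : ℕ → ℕ) (y : ℕ → ℕ → Fin m → ℝ) (t : ℕ) :
    (Sig m α Φ y t).PosDef := by
  refine Matrix.PosDef.of_dotProduct_mulVec_pos (sig_herm α Φ y t) fun x hx => ?_
  have h1 : 0 < x ⬝ᵥ x := by
    have hne : x ⬝ᵥ x ≠ 0 := by
      intro h
      exact hx (by
        ext i
        exact congrFun (dotProduct_self_eq_zero.mp h) i)
    have h2 : 0 ≤ x ⬝ᵥ x := Finset.sum_nonneg fun i _ => mul_self_nonneg _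
    exact lt_of_le_of_ne h2 (Ne.symm hne)
  have := sig_quad α Φ y t x
  simp only [star_trivial]
  nlinarith

lemma sig_trace (α : ℝ) (Φ : ℕ → ℕ) (y : ℕ → ℕ → Fin m → ℝ) (t : ℕ) :
    (Sig m α Φ y t).trace
      = α * m + ∑ s ∈ Finset.Icc 1 t, ∑ k ∈ Finset.Icc 1 (Φ s), (y s k ⬝ᵥ y s k) := by
  induction t with
  | zero =>
    show (α • (1 : Matrix (Fin m) (Fin m) ℝ)).trace = _
    simp [Matrix.trace_smul, Matrix.trace_one]
  | succ t ih =>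
    show (Sig m α Φ y t + _).trace = _
    rw [Matrix.trace_add, ih, Matrix.trace_sum,
      Finset.sum_Icc_succ_top (Nat.one_le_iff_ne_zero.mpr (Nat.succ_ne_zero t))]
    have h : ∀ k, (vecMulVec (y (t+1) k) (y (t+1) k)).trace = y (t+1) k ⬝ᵥ y (t+1) k := by
      intro k
      simp [Matrix.trace, Matrix.diag, Matrix.vecMulVec_apply, dotProduct]
    simp only [h]
    ring

lemma dp_cs (v z : Fin m → ℝ) : v ⬝ᵥ z ≤ Real.sqrt (v ⬝ᵥ v) * Real.sqrt (z ⬝ᵥ z) := by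
  have h := Finset.sum_mul_sq_le_sq_mul_sq Finset.univ v z
  have hvv : ∑ i, v i ^ 2 = v ⬝ᵥ v := by simp [dotProduct, sq]
  have hzz : ∑ i, z i ^ 2 = z ⬝ᵥ z := by simp [dotProduct, sq]
  rw [hvv, hzz] at h
  calc v ⬝ᵥ z ≤ |v ⬝ᵥ z| := le_abs_self _
    _ = Real.sqrt ((v ⬝ᵥ z) ^ 2) := (Real.sqrt_sq_eq_abs _).symm
    _ ≤ Real.sqrt ((v ⬝ᵥ v) * (z ⬝ᵥ z)) := Real.sqrt_le_sqrt h
    _ = Real.sqrt (v ⬝ᵥ v) * Real.sqrt (z ⬝ᵥ z) :=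
        Real.sqrt_mul (Finset.sum_nonneg fun i _ => mul_self_nonneg _) _

lemma quad_inv_bound {α : ℝ} (hα : 0 < α) {A : Matrix (Fin m) (Fin m) ℝ}
    (hA : A.PosDef) (hlow : ∀ x : Fin m → ℝ, α * (x ⬝ᵥ x) ≤ x ⬝ᵥ A *ᵥ x)
    (v : Fin m → ℝ) (hv : v ⬝ᵥ v ≤ 1) :
    0 ≤ v ⬝ᵥ A⁻¹ *ᵥ v ∧ v ⬝ᵥ A⁻¹ *ᵥ v ≤ α⁻¹ := by
  set z := A⁻¹ *ᵥ v with hz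
  have hdet : IsUnit A.det := isUnit_iff_ne_zero.mpr hA.det_pos.ne'
  have hAz : A *ᵥ z = v := by
    rw [hz, Matrix.mulVec_mulVec, Matrix.mul_nonsing_inv A hdet, Matrix.one_mulVec]
  have hq : v ⬝ᵥ z = z ⬝ᵥ A *ᵥ z := by rw [hAz, dotProduct_comm]
  have h1 : α * (z ⬝ᵥ z) ≤ v ⬝ᵥ z := hq ▸ hlow z
  have hzz : 0 ≤ z ⬝ᵥ z := Finset.sum_nonneg fun i _ => mul_self_nonneg _
  have hq0 : 0 ≤ v ⬝ᵥ z := le_trans (by positivity) h1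
  refine ⟨hq0, ?_⟩
  have h2 : v ⬝ᵥ z ≤ Real.sqrt (v ⬝ᵥ v) * Real.sqrt (z ⬝ᵥ z) := dp_cs v z
  have h3 : Real.sqrt (v ⬝ᵥ v) ≤ 1 := Real.sqrt_le_one.mpr hv
  set s := Real.sqrt (z ⬝ᵥ z) with hs
  have hs0 : 0 ≤ s := Real.sqrt_nonneg _
  have hs2 : s ^ 2 = z ⬝ᵥ z := Real.sq_sqrt hzz
  have h4 : v ⬝ᵥ z ≤ s := by nlinarith
  have h5 : α * s ^ 2 ≤ s := by nlinarith
  have h6 : s ≤ α⁻¹ := by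
    nlinarith [mul_nonneg hα.le (sq_nonneg (s - α⁻¹)), mul_inv_cancel₀ hα.ne']
  linarith

lemma trace_eq_sum_eig {A : Matrix (Fin m) (Fin m) ℝ} (hA : A.IsHermitian) :
    A.trace = ∑ i, hA.eigenvalues i := by
  have hU : star (hA.eigenvectorUnitary : Matrix (Fin m) (Fin m) ℝ) *
      (hA.eigenvectorUnitary : Matrix (Fin m) (Fin m) ℝ) = 1 :=
    Matrix.mem_unitaryGroup_iff'.mp hA.eigenvectorUnitary.2
  conv_lhs => rw [hA.spectral_theorem, Unitary.conjStarAlgAut_apply]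
  rw [Matrix.trace_mul_comm, ← mul_assoc, hU, one_mul, Matrix.trace_diagonal]
  simp

lemma det_one_add_ge {B : Matrix (Fin m) (Fin m) ℝ} (hB : B.PosSemidef) :
    1 + B.trace ≤ (1 + B).det := by
  set U : Matrix (Fin m) (Fin m) ℝ := (hB.1.eigenvectorUnitary : Matrix (Fin m) (Fin m) ℝ)
    with hU
  have hU1 : U * star U = 1 := Matrix.mem_unitaryGroup_iff.mp hB.1.eigenvectorUnitary.2
  set d := hB.1.eigenvalues with hd
  have hD : (1 : Matrix (Fin m) (Fin m) ℝ) + B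
      = U * diagonal (fun i => 1 + d i) * star U := by
    have h1 : (diagonal (fun i => (1:ℝ) + d i)) = 1 + diagonal d := by
      rw [← Matrix.diagonal_one, Matrix.diagonal_add]
    rw [h1, Matrix.mul_add, Matrix.add_mul, Matrix.mul_one, hU1]
    congr 1
    conv_lhs => rw [hB.1.spectral_theorem]
    congr
  have hUdet : U.det * (star U).det = 1 := by
    rw [← Matrix.det_mul, hU1, Matrix.det_one]
  have hdet : (1 + B).det = ∏ i, (1 + d i) := by
    rw [hD, Matrix.det_mul, Matrix.det_mul, Matrix.det_diagonal]
    calc (U.det * ∏ i, (1 + d i)) * (star U).det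
        = (U.det * (star U).det) * ∏ i, (1 + d i) := by ring
      _ = ∏ i, (1 + d i) := by rw [hUdet, one_mul]
  rw [hdet, trace_eq_sum_eig hB.1]
  exact one_add_sum_le_prod _ _ fun i _ => hB.eigenvalues_nonneg i

section
open scoped MatrixOrder

lemma det_step {A M : Matrix (Fin m) (Fin m) ℝ} (hA : A.PosDef) (hM : M.PosSemidef) :
    A.det * (1 + (A⁻¹ * M).trace) ≤ (A + M).det := by
  set S := CFC.sqrt A with hSdef
  have hS : S.PosSemidef := Matrix.nonneg_iff_posSemidef.mp (CFC.sqrt_nonneg A)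
  have hSS : S * S = A := CFC.sqrt_mul_sqrt_self A hA.posSemidef.nonneg
  have hdetS : S.det * S.det = A.det := by rw [← Matrix.det_mul, hSS]
  have hdS : S.det ≠ 0 := by
    intro h
    rw [h, mul_zero] at hdetS
    exact hA.det_pos.ne' hdetS.symm
  have hdSu : IsUnit S.det := isUnit_iff_ne_zero.mpr hdS
  have hSherm : (S⁻¹)ᴴ = S⁻¹ := by
    rw [Matrix.conjTranspose_nonsing_inv, hS.isHermitian]
  set B := S⁻¹ * M * S⁻¹ with hBdef
  have hB : B.PosSemidef := by
    have := hM.conjTranspose_mul_mul_same (B := S⁻¹)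
    rwa [hSherm] at this
  have hSinv : S⁻¹ * S⁻¹ = A⁻¹ := by rw [← Matrix.mul_inv_rev, hSS]
  have hAM : A + M = S * (1 + B) * S := by
    rw [Matrix.mul_add, Matrix.add_mul, Matrix.mul_one, hSS, hBdef]
    congr 1
    symm
    calc S * (S⁻¹ * M * S⁻¹) * S = (S * S⁻¹) * M * (S⁻¹ * S) := by
          noncomm_ring
      _ = M := by
          rw [Matrix.mul_nonsing_inv S hdSu, Matrix.nonsing_inv_mul S hdSu, one_mul,
            Matrix.mul_one]
  have htrB : B.trace = (A⁻¹ * M).trace := by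
    rw [hBdef, Matrix.trace_mul_comm, ← mul_assoc, hSinv]
  have hone : 1 + B.trace ≤ (1 + B).det := det_one_add_ge hB
  have hdet : (A + M).det = A.det * (1 + B).det := by
    rw [hAM, Matrix.det_mul, Matrix.det_mul]
    calc S.det * (1 + B).det * S.det = (S.det * S.det) * (1 + B).det := by ring
      _ = A.det * (1 + B).det := by rw [hdetS]
  have hmul := mul_le_mul_of_nonneg_left hone hA.det_pos.le
  rw [htrB] at hmul
  rw [hdet]
  exact hmul

end

lemma det_le_pow {A : Matrix (Fin m) (Fin m) ℝ} (hm : 1 ≤ m) (hA : A.PosSemidef) :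
    A.det ≤ (A.trace / m) ^ m := by
  have hm0 : (0:ℝ) < m := by exact_mod_cast hm
  have hdet : A.det = ∏ i, hA.1.eigenvalues i := by
    rw [hA.1.det_eq_prod_eigenvalues]; norm_num
  have htr : A.trace = ∑ i, hA.1.eigenvalues i := trace_eq_sum_eig hA.1
  set d := hA.1.eigenvalues with hd
  have hdnn : ∀ i, 0 ≤ d i := hA.eigenvalues_nonneg
  have hgm := Real.geom_mean_le_arith_mean_weighted Finset.univ (fun _ => (m:ℝ)⁻¹) d
    (fun i _ => by positivity)
    (by simp [Finset.card_univ]; field_simp)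
    (fun i _ => hdnn i)
  have hsum : ∑ i, (m:ℝ)⁻¹ * d i = A.trace / m := by
    rw [htr, ← Finset.mul_sum]; ring
  have hprod : (∏ i, d i ^ ((m:ℝ)⁻¹)) ^ m = ∏ i, d i := by
    rw [← Finset.prod_pow]
    refine Finset.prod_congr rfl fun i _ => ?_
    rw [← Real.rpow_natCast (d i ^ ((m:ℝ)⁻¹)) m, ← Real.rpow_mul (hdnn i),
      inv_mul_cancel₀ hm0.ne', Real.rpow_one]
  have hglhs : 0 ≤ ∏ i, d i ^ ((m:ℝ)⁻¹) :=
    Finset.prod_nonneg fun i _ => Real.rpow_nonneg (hdnn i) _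
  calc A.det = (∏ i, d i ^ ((m:ℝ)⁻¹)) ^ m := by rw [hdet, hprod]
    _ ≤ (∑ i, (m:ℝ)⁻¹ * d i) ^ m := pow_le_pow_left₀ hglhs hgm m
    _ = (A.trace / m) ^ m := by rw [hsum]

lemma scalar_log {c u : ℝ} (hc : 0 < c) (hu : 0 ≤ u) (huc : u ≤ c) :
    u * Real.log (1 + c) ≤ c * Real.log (1 + u) := by
  have hp1 : 0 ≤ u / c := by positivity
  have hp2 : u / c ≤ 1 := by rw [div_le_one hc]; exact huc
  have hB := rpow_one_add_le_one_add_mul_self (s := c) (by linarith) hp1 hp2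
  have h1 : (1:ℝ) + u/c*c = 1 + u := by field_simp
  rw [h1] at hB
  have hpos : (0:ℝ) < 1 + c := by linarith
  have hlog := Real.log_le_log (by positivity) hB
  rw [Real.log_rpow hpos] at hlog
  calc u * Real.log (1+c) = c * (u/c * Real.log (1+c)) := by field_simp
    _ ≤ c * Real.log (1+u) := mul_le_mul_of_nonneg_left hlog hc.le

lemma tele (L : ℕ → ℝ) (T : ℕ) : ∑ t ∈ Finset.Icc 1 T, (L t - L (t-1)) = L T - L 0 := by
  induction T with
  | zero => simp
  | succ n ih =>
    rw [Finset.sum_Icc_succ_top (Nat.succ_le_succ (Nat.zero_le n)), ih]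
    simp

end Stmt16Aux

open Stmt16Aux

/-- the Cauchy–Schwarz consequence of the elliptical potential bound:
`Σ_{t=1}^T Σ_{k=1}^{Φ_t} g_{t,k} ≤ √(T N² m log(1 + TN/(mα)) / (α log(1 + α⁻¹)))`, where
`g_{t,k} = (y_{t,k}ᵀ (Σ_{t-1})⁻¹ y_{t,k})^{1/2}`. -/
theorem stmt16 (m N T : ℕ) (hm : 1 ≤ m) (hN : 1 ≤ N) (hT : 1 ≤ T)
    (α : ℝ) (hα : 0 < α)
    (Φ : ℕ → ℕ) (hΦ : ∀ t ∈ Finset.Icc 1 T, Φ t ≤ N)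
    (y : ℕ → ℕ → Fin m → ℝ)
    (hy : ∀ t ∈ Finset.Icc 1 T, ∀ k ∈ Finset.Icc 1 (Φ t),
      Real.sqrt (y t k ⬝ᵥ y t k) ≤ 1) :
    ∑ t ∈ Finset.Icc 1 T, ∑ k ∈ Finset.Icc 1 (Φ t),
        Real.sqrt (y t k ⬝ᵥ (Sig m α Φ y (t - 1))⁻¹ *ᵥ y t k) ≤
      Real.sqrt ((T : ℝ) * N ^ 2 * m * Real.log (1 + T * N / (m * α)) /
        (α * Real.log (1 + α⁻¹))) := by
  have hm0 : (0:ℝ) < m := by exact_mod_cast hm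
  have hN0 : (0:ℝ) < N := by exact_mod_cast hN
  have hT0 : (0:ℝ) < T := by exact_mod_cast hT
  have hainv : (0:ℝ) < α⁻¹ := inv_pos.mpr hα
  have hLg : 0 < Real.log (1 + α⁻¹) := Real.log_pos (by linarith)
  set C : ℝ := α⁻¹ / Real.log (1 + α⁻¹) with hC
  have hC0 : 0 ≤ C := by positivity
  let q : ℕ → ℕ → ℝ := fun t k => y t k ⬝ᵥ (Sig m α Φ y (t - 1))⁻¹ *ᵥ y t k
  let S : ℕ → ℝ := fun t => ∑ k ∈ Finset.Icc 1 (Φ t), q t k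
  let L : ℕ → ℝ := fun t => Real.log (Sig m α Φ y t).det
  show ∑ t ∈ Finset.Icc 1 T, ∑ k ∈ Finset.Icc 1 (Φ t), Real.sqrt (q t k) ≤ _
  -- pointwise bounds on q
  have hq : ∀ t ∈ Finset.Icc 1 T, ∀ k ∈ Finset.Icc 1 (Φ t), 0 ≤ q t k ∧ q t k ≤ α⁻¹ := by
    intro t ht k hk
    have hyk : y t k ⬝ᵥ y t k ≤ 1 := Real.sqrt_le_one.mp (hy t ht k hk)
    exact quad_inv_bound hα (sig_posdef hα Φ y (t-1)) (sig_quad α Φ y (t-1)) _ hyk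
  have hSnn : ∀ t ∈ Finset.Icc 1 T, 0 ≤ S t := fun t ht =>
    Finset.sum_nonneg fun k hk => (hq t ht k hk).1
  -- key1 : per-round sum of squares vs its own log
  have key1 : ∀ t ∈ Finset.Icc 1 T, S t ≤ N * (C * Real.log (1 + S t)) := by
    intro t ht
    have hSn : 0 ≤ S t := hSnn t ht
    have hlog0 : 0 ≤ Real.log (1 + S t) := Real.log_nonneg (by linarith)
    have hterm : ∀ k ∈ Finset.Icc 1 (Φ t), q t k ≤ C * Real.log (1 + S t) := by
      intro k hk
      obtain ⟨h0, h1⟩ := hq t ht k hk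
      have h2 := scalar_log hainv h0 h1
      have h3 : q t k ≤ C * Real.log (1 + q t k) := by
        rw [hC, div_mul_eq_mul_div, le_div_iff₀ hLg]
        linarith
      have h4 : q t k ≤ S t := Finset.single_le_sum (fun j hj => (hq t ht j hj).1) hk
      have h5 : Real.log (1 + q t k) ≤ Real.log (1 + S t) :=
        Real.log_le_log (by linarith) (by linarith)
      calc q t k ≤ C * Real.log (1 + q t k) := h3
        _ ≤ C * Real.log (1 + S t) := mul_le_mul_of_nonneg_left h5 hC0
    calc S t ≤ ∑ _k ∈ Finset.Icc 1 (Φ t), C * Real.log (1 + S t) :=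
        Finset.sum_le_sum hterm
      _ = (Φ t : ℝ) * (C * Real.log (1 + S t)) := by
          rw [Finset.sum_const, Nat.card_Icc]
          simp
      _ ≤ N * (C * Real.log (1 + S t)) := by
          have : (Φ t : ℝ) ≤ N := by exact_mod_cast hΦ t ht
          exact mul_le_mul_of_nonneg_right this (by positivity)
  -- key2 : log-det increment
  have key2 : ∀ t ∈ Finset.Icc 1 T, Real.log (1 + S t) ≤ L t - L (t-1) := by
    intro t ht
    have ht1 : 1 ≤ t := (Finset.mem_Icc.mp ht).1
    obtain ⟨s, rfl⟩ : ∃ s, t = s + 1 := ⟨t - 1, by omega⟩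
    have hd := det_step (sig_posdef hα Φ y s)
      (psd_sum_vmv (Finset.Icc 1 (Φ (s+1))) (y (s+1)))
    have htr : ((Sig m α Φ y s)⁻¹ *
        ∑ k ∈ Finset.Icc 1 (Φ (s+1)), vecMulVec (y (s+1) k) (y (s+1) k)).trace
        = S (s+1) := by
      rw [Finset.mul_sum, Matrix.trace_sum]
      exact Finset.sum_congr rfl fun k hk => trace_mul_vmv _ _
    rw [htr] at hd
    have hstep : (Sig m α Φ y s).det * (1 + S (s+1)) ≤ (Sig m α Φ y (s+1)).det := hd
    have hdp : 0 < (Sig m α Φ y s).det := (sig_posdef hα Φ y s).det_pos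
    have h1S : (0:ℝ) < 1 + S (s+1) := by
      have := hSnn _ ht
      linarith
    have hlog := Real.log_le_log (by positivity) hstep
    rw [Real.log_mul hdp.ne' h1S.ne'] at hlog
    have hLs : L ((s+1)-1) = Real.log (Sig m α Φ y s).det := rfl
    simp only [L, hLs]
    linarith
  -- sum of S
  have hsum1 : ∑ t ∈ Finset.Icc 1 T, S t ≤ N * C * (L T - L 0) := by
    calc ∑ t ∈ Finset.Icc 1 T, S t
        ≤ ∑ t ∈ Finset.Icc 1 T, N * C * (L t - L (t-1)) := by
          refine Finset.sum_le_sum fun t ht => ?_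
          calc S t ≤ N * (C * Real.log (1 + S t)) := key1 t ht
            _ ≤ N * (C * (L t - L (t-1))) := by
                exact mul_le_mul_of_nonneg_left
                  (mul_le_mul_of_nonneg_left (key2 t ht) hC0) hN0.le
            _ = N * C * (L t - L (t-1)) := by ring
      _ = N * C * (L T - L 0) := by rw [← Finset.mul_sum, tele]
  -- bound on L T - L 0
  have hL0 : L 0 = m * Real.log α := by
    show Real.log (α • (1 : Matrix (Fin m) (Fin m) ℝ)).det = _
    rw [Matrix.det_smul, Matrix.det_one, mul_one, Fintype.card_fin, Real.log_pow]
  have hsumy : ∑ s ∈ Finset.Icc 1 T, ∑ k ∈ Finset.Icc 1 (Φ s), (y s k ⬝ᵥ y s k)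
      ≤ (T:ℝ) * N := by
    calc ∑ s ∈ Finset.Icc 1 T, ∑ k ∈ Finset.Icc 1 (Φ s), (y s k ⬝ᵥ y s k)
        ≤ ∑ s ∈ Finset.Icc 1 T, (N:ℝ) := by
          refine Finset.sum_le_sum fun s hs => ?_
          calc ∑ k ∈ Finset.Icc 1 (Φ s), (y s k ⬝ᵥ y s k)
              ≤ ∑ _k ∈ Finset.Icc 1 (Φ s), (1:ℝ) :=
                Finset.sum_le_sum fun k hk => Real.sqrt_le_one.mp (hy s hs k hk)
            _ = (Φ s : ℝ) := by simp [Nat.card_Icc]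
            _ ≤ (N:ℝ) := by exact_mod_cast hΦ s hs
      _ = (T:ℝ) * N := by
          rw [Finset.sum_const, Nat.card_Icc]
          simp [mul_comm]
  have hsynn : 0 ≤ ∑ s ∈ Finset.Icc 1 T, ∑ k ∈ Finset.Icc 1 (Φ s), (y s k ⬝ᵥ y s k) :=
    Finset.sum_nonneg fun s _ => Finset.sum_nonneg fun k _ =>
      Finset.sum_nonneg fun i _ => mul_self_nonneg _
  have htrT : (Sig m α Φ y T).trace ≤ α * m + T * N := by
    rw [sig_trace]
    linarith
  have htrnn : 0 < (Sig m α Φ y T).trace := by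
    rw [sig_trace]
    nlinarith
  have hbase : (0:ℝ) < α + T * N / m := by positivity
  have hLT : L T ≤ m * Real.log (α + T * N / m) := by
    have hdle := det_le_pow hm (sig_posdef hα Φ y T).posSemidef
    have h1 : (Sig m α Φ y T).trace / m ≤ α + T * N / m := by
      rw [div_le_iff₀ hm0]
      calc (Sig m α Φ y T).trace ≤ α * m + T * N := htrT
        _ = (α + T * N / m) * m := by field_simp
    have h2 : (Sig m α Φ y T).det ≤ (α + T * N / m) ^ m := by
      calc (Sig m α Φ y T).det ≤ ((Sig m α Φ y T).trace / m) ^ m := hdle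
        _ ≤ (α + T * N / m) ^ m := pow_le_pow_left₀ (by positivity) h1 m
    calc L T ≤ Real.log ((α + T * N / m) ^ m) :=
        Real.log_le_log (sig_posdef hα Φ y T).det_pos h2
      _ = m * Real.log (α + T * N / m) := by rw [Real.log_pow]
  have hLdiff : L T - L 0 ≤ m * Real.log (1 + T * N / (m * α)) := by
    have h1 : Real.log (α + T * N / m) - Real.log α = Real.log (1 + T * N / (m * α)) := by
      rw [← Real.log_div hbase.ne' hα.ne']
      congr 1
      field_simp
    have : L T - L 0 ≤ m * Real.log (α + T * N / m) - m * Real.log α := by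
      rw [hL0]
      linarith
    calc L T - L 0 ≤ m * (Real.log (α + T * N / m) - Real.log α) := by linarith
      _ = m * Real.log (1 + T * N / (m * α)) := by rw [h1]
  -- Cauchy–Schwarz
  have hlogTN : 0 ≤ Real.log (1 + T * N / (m * α)) := by
    have h0 : (0:ℝ) ≤ T * N / (m * α) := by positivity
    exact Real.log_nonneg (by linarith)
  set P : ℝ := ∑ t ∈ Finset.Icc 1 T, ∑ k ∈ Finset.Icc 1 (Φ t), Real.sqrt (q t k) with hP
  have hP0 : 0 ≤ P :=
    Finset.sum_nonneg fun _ _ => Finset.sum_nonneg fun _ _ => Real.sqrt_nonneg _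
  have hP2 : P ^ 2 ≤ (T:ℝ) * N * ∑ t ∈ Finset.Icc 1 T, S t := by
    have h1 : P ^ 2 ≤ (T:ℝ) * ∑ t ∈ Finset.Icc 1 T,
        (∑ k ∈ Finset.Icc 1 (Φ t), Real.sqrt (q t k)) ^ 2 := by
      have := sq_sum_le_card_mul_sum_sq (s := Finset.Icc 1 T)
        (f := fun t => ∑ k ∈ Finset.Icc 1 (Φ t), Real.sqrt (q t k))
      simpa [Nat.card_Icc] using this
    have h2 : ∀ t ∈ Finset.Icc 1 T,
        (∑ k ∈ Finset.Icc 1 (Φ t), Real.sqrt (q t k)) ^ 2 ≤ (N:ℝ) * S t := by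
      intro t ht
      have hcs := sq_sum_le_card_mul_sum_sq (s := Finset.Icc 1 (Φ t))
        (f := fun k => Real.sqrt (q t k))
      have hcard : ((Finset.Icc 1 (Φ t)).card : ℝ) = Φ t := by simp [Nat.card_Icc]
      have hsq : ∑ k ∈ Finset.Icc 1 (Φ t), Real.sqrt (q t k) ^ 2 = S t :=
        Finset.sum_congr rfl fun k hk => Real.sq_sqrt (hq t ht k hk).1
      calc (∑ k ∈ Finset.Icc 1 (Φ t), Real.sqrt (q t k)) ^ 2
          ≤ ((Finset.Icc 1 (Φ t)).card : ℝ) * ∑ k ∈ Finset.Icc 1 (Φ t), Real.sqrt (q t k) ^ 2 :=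
            hcs
        _ = (Φ t : ℝ) * S t := by rw [hcard, hsq]
        _ ≤ (N:ℝ) * S t := by
            have : (Φ t : ℝ) ≤ N := by exact_mod_cast hΦ t ht
            exact mul_le_mul_of_nonneg_right this (hSnn t ht)
    calc P ^ 2 ≤ (T:ℝ) * ∑ t ∈ Finset.Icc 1 T,
          (∑ k ∈ Finset.Icc 1 (Φ t), Real.sqrt (q t k)) ^ 2 := h1
      _ ≤ (T:ℝ) * ∑ t ∈ Finset.Icc 1 T, (N:ℝ) * S t :=
          mul_le_mul_of_nonneg_left (Finset.sum_le_sum h2) hT0.le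
      _ = (T:ℝ) * N * ∑ t ∈ Finset.Icc 1 T, S t := by rw [← Finset.mul_sum]; ring
  have hfinal : P ^ 2 ≤ (T:ℝ) * N ^ 2 * m * Real.log (1 + T * N / (m * α)) /
      (α * Real.log (1 + α⁻¹)) := by
    have h1 : ∑ t ∈ Finset.Icc 1 T, S t ≤ N * C * (m * Real.log (1 + T * N / (m * α))) :=
      le_trans hsum1 (mul_le_mul_of_nonneg_left hLdiff (by positivity))
    calc P ^ 2 ≤ (T:ℝ) * N * ∑ t ∈ Finset.Icc 1 T, S t := hP2
      _ ≤ (T:ℝ) * N * (N * C * (m * Real.log (1 + T * N / (m * α)))) :=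
          mul_le_mul_of_nonneg_left h1 (by positivity)
      _ = (T:ℝ) * N ^ 2 * m * Real.log (1 + T * N / (m * α)) /
          (α * Real.log (1 + α⁻¹)) := by
          rw [hC]
          field_simp
  have hs := Real.sqrt_le_sqrt hfinal
  rwa [Real.sqrt_sq hP0] at hs
end
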